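/- arXiv:2509.14091 — 6 statements merged into one kernel-verified Lean document; each statement's English description precedes it below -/
import Mathlib

section
/- Consider a generalised reachability game on a game arena with start vertex s whose target sets are exactly the singletons {t_1}, ..., {t_n}. Then Eve wins the game if and only if (i) the attractors Attr({t_1}), ..., Attr({t_n}) form a chain under inclusion, i.e., for all i, j either Attr({t_i}) ⊆ Attr({t_j}) or Attr({t_j}) ⊆ Attr({t_i}), and (ii) s ∈ Attr({t_i}) for every i. -/
/-- A game arena: a finite directed graph in which every vertex has at least one
outgoing edge, together with the set of vertices controlled by Eve (the remaining
vertices are controlled by Adam). -/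
structure Arena (V : Type*) [Fintype V] where
  E : V → V → Prop
  VEve : Set V
  succ_nonempty : ∀ v, ∃ w, E v w

variable {V : Type*} [Fintype V]

/-- An infinite play starting from `s`. -/
def IsPlay (A : Arena V) (s : V) (p : ℕ → V) : Prop :=
  p 0 = s ∧ ∀ i, A.E (p i) (p (i + 1))

/-- The play `p` visits the set `S`. -/
def Visits (p : ℕ → V) (S : Set V) : Prop := ∃ i, p i ∈ S

/-- A strategy maps a history (the sequence of previously visited vertices)
together with the current vertex to a next vertex. -/
def Strategy (V : Type*) : Type _ := List V → V → V

/-- A strategy is valid if it always moves along an edge. -/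
def ValidStrategy (A : Arena V) (σ : Strategy V) : Prop :=
  ∀ h v, A.E v (σ h v)

/-- The history `v_0 ... v_{i-1}` of the play `p` before time `i`. -/
def hist (p : ℕ → V) (i : ℕ) : List V := List.ofFn fun j : Fin i => p j

/-- The play `p` is consistent with the Eve-strategy `σ`. -/
def ConsistentEve (A : Arena V) (σ : Strategy V) (p : ℕ → V) : Prop :=
  ∀ i, p i ∈ A.VEve → p (i + 1) = σ (hist p i) (p i)

/-- The play `p` is consistent with the Adam-strategy `σ`. -/
def ConsistentAdam (A : Arena V) (σ : Strategy V) (p : ℕ → V) : Prop :=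
  ∀ i, p i ∉ A.VEve → p (i + 1) = σ (hist p i) (p i)

/-- The `i`-step Eve-attractor of the set `S`. -/
def AttrN (A : Arena V) (S : Set V) : ℕ → Set V
  | 0 => S
  | i + 1 => AttrN A S i ∪ {u | u ∈ A.VEve ∧ ∃ v, A.E u v ∧ v ∈ AttrN A S i}
      ∪ {u | u ∉ A.VEve ∧ ∀ v, A.E u v → v ∈ AttrN A S i}

/-- The Eve-attractor of the set `S`. -/
def Attr (A : Arena V) (S : Set V) : Set V := ⋃ i, AttrN A S i

/-- Eve wins the generalised reachability game with target sets `F i`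
from `s` if she has a strategy such that every consistent play from `s`
visits every target set. -/
def EveWins {ι : Type*} (A : Arena V) (s : V) (F : ι → Set V) : Prop :=
  ∃ σ : Strategy V, ValidStrategy A σ ∧
    ∀ p, IsPlay A s p → ConsistentEve A σ p → ∀ i, Visits p (F i)

open scoped Classical

namespace GR

lemma attrN_subset_attr (A : Arena V) (S : Set V) (i : ℕ) : AttrN A S i ⊆ Attr A S :=
  fun _ hx => Set.mem_iUnion.2 ⟨i, hx⟩

lemma subset_attr (A : Arena V) (S : Set V) : S ⊆ Attr A S := attrN_subset_attr A S 0

lemma eve_closed {A : Arena V} {S : Set V} {v w : V} (hv : v ∈ A.VEve) (he : A.E v w)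
    (hw : w ∈ Attr A S) : v ∈ Attr A S := by
  obtain ⟨i, hi⟩ := Set.mem_iUnion.1 hw
  exact Set.mem_iUnion.2 ⟨i + 1, Or.inl (Or.inr ⟨hv, w, he, hi⟩)⟩

lemma attrN_succ_subset (A : Arena V) (S : Set V) (i : ℕ) :
    AttrN A S i ⊆ AttrN A S (i + 1) := fun x hx => Or.inl (Or.inl hx)

lemma attrN_mono {A : Arena V} {S : Set V} {i j : ℕ} (h : i ≤ j) :
    AttrN A S i ⊆ AttrN A S j := by
  induction j with
  | zero => rw [Nat.le_zero.1 h]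
  | succ j ih =>
    rcases Nat.eq_or_lt_of_le h with h' | h'
    · subst h'; exact subset_rfl
    · exact (ih (Nat.lt_succ_iff.1 h')).trans (attrN_succ_subset A S j)

lemma adam_escape {A : Arena V} {S : Set V} {v : V} (hv : v ∉ A.VEve)
    (h : v ∉ Attr A S) : ∃ w, A.E v w ∧ w ∉ Attr A S := by
  by_contra hc
  push_neg at hc
  have hall : ∀ w, A.E v w → w ∈ Attr A S := hc
  set idx : V → ℕ := fun w => if hw : w ∈ Attr A S then (Set.mem_iUnion.1 hw).choose else 0
    with hidx
  set N : ℕ := Finset.univ.sup idx with hN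
  apply h
  refine Set.mem_iUnion.2 ⟨N + 1, Or.inr ⟨hv, fun w hw => ?_⟩⟩
  have hwA := hall w hw
  have h1 : w ∈ AttrN A S (idx w) := by
    rw [hidx]; simp only [hwA, dif_pos]
    exact (Set.mem_iUnion.1 hwA).choose_spec
  exact attrN_mono (Finset.le_sup (Finset.mem_univ w)) h1

lemma eve_escape {A : Arena V} {S : Set V} {v w : V} (hv : v ∈ A.VEve)
    (h : v ∉ Attr A S) (he : A.E v w) : w ∉ Attr A S :=
  fun hw => h (eve_closed hv he hw)

lemma attr_trans {A : Arena V} {S T : Set V} (h : S ⊆ Attr A T) :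
    Attr A S ⊆ Attr A T := by
  have : ∀ i, AttrN A S i ⊆ Attr A T := by
    intro i
    induction i with
    | zero => exact h
    | succ i ih =>
      rintro x ((hx | ⟨hE, w, hew, hw⟩) | ⟨hA, hall⟩)
      · exact ih hx
      · exact eve_closed hE hew (ih hw)
      · by_contra hx
        obtain ⟨w, hew, hw⟩ := adam_escape hA hx
        exact hw (ih (hall w hew))
  exact fun x hx => by obtain ⟨i, hi⟩ := Set.mem_iUnion.1 hx; exact this i hi

noncomputable def rk (A : Arena V) (T : Set V) (v : V) : ℕ := sInf {i | v ∈ AttrN A T i}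

lemma mem_attrN_rk {A : Arena V} {T : Set V} {v : V} (h : v ∈ Attr A T) :
    v ∈ AttrN A T (rk A T v) :=
  Nat.sInf_mem (by obtain ⟨i, hi⟩ := Set.mem_iUnion.1 h; exact ⟨i, hi⟩)

lemma rk_le {A : Arena V} {T : Set V} {v : V} {i : ℕ} (h : v ∈ AttrN A T i) :
    rk A T v ≤ i := Nat.sInf_le h

lemma rk_pos {A : Arena V} {T : Set V} {v : V} (hv : v ∈ Attr A T) (hvT : v ∉ T) :
    0 < rk A T v := by
  rcases Nat.eq_zero_or_pos (rk A T v) with h0 | h0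
  · exfalso
    have h2 := mem_attrN_rk hv
    rw [h0] at h2
    exact hvT (by rwa [show AttrN A T 0 = T from rfl] at h2)
  · exact h0

lemma attr_step {A : Arena V} {T : Set V} {v : V} (hv : v ∈ Attr A T) (hvT : v ∉ T) :
    (v ∈ A.VEve → ∃ w, A.E v w ∧ w ∈ AttrN A T (rk A T v - 1)) ∧
    (v ∉ A.VEve → ∀ w, A.E v w → w ∈ AttrN A T (rk A T v - 1)) := by
  have hmem := mem_attrN_rk hv
  have hpos := rk_pos hv hvT
  obtain ⟨m, hm⟩ := Nat.exists_eq_add_of_lt hpos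
  rw [zero_add] at hm
  have h1 : rk A T v - 1 = m := by omega
  rw [hm] at hmem
  have hnot : v ∉ AttrN A T m := fun h => by have := rk_le h; omega
  rcases hmem with (hx | ⟨hE, w, hew, hw⟩) | ⟨hA, hall⟩
  · exact absurd hx hnot
  · exact ⟨fun _ => ⟨w, hew, h1 ▸ hw⟩, fun hvA => absurd hE hvA⟩
  · exact ⟨fun hvE => absurd hvE hA, fun _ w hw => h1 ▸ hall w hw⟩

lemma rk_lt {A : Arena V} {T : Set V} {v w : V} (hv : v ∈ Attr A T) (hvT : v ∉ T)
    (hw : w ∈ AttrN A T (rk A T v - 1)) : rk A T w < rk A T v := by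
  have h1 := rk_le hw
  have h2 := rk_pos hv hvT
  omega

lemma hist_succ (p : ℕ → V) (m : ℕ) : hist p (m + 1) = hist p m ++ [p m] := by
  rw [hist, List.ofFn_succ', List.concat_eq_append]
  simp only [Fin.coe_castSucc, Fin.val_last]
  rfl

lemma mem_hist {p : ℕ → V} {m : ℕ} {a : V} : a ∈ hist p m ↔ ∃ k, k < m ∧ p k = a := by
  simp only [hist, List.mem_ofFn, Set.mem_range]
  constructor
  · rintro ⟨i, hi⟩; exact ⟨i, i.isLt, hi⟩
  · rintro ⟨k, hk, hp⟩; exact ⟨⟨k, hk⟩, hp⟩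

noncomputable def playP (f : List V → V → V) (s : V) : ℕ → List V × V
  | 0 => ([], s)
  | m + 1 => ((playP f s m).1 ++ [(playP f s m).2], f (playP f s m).1 (playP f s m).2)

noncomputable def play (f : List V → V → V) (s : V) (m : ℕ) : V := (playP f s m).2

lemma playP_fst (f : List V → V → V) (s : V) : ∀ m, (playP f s m).1 = hist (play f s) m
  | 0 => by simp [playP, hist]
  | m + 1 => by
      rw [hist_succ]
      show (playP f s m).1 ++ [(playP f s m).2] = _
      rw [playP_fst f s m]; rfl

lemma play_zero (f : List V → V → V) (s : V) : play f s 0 = s := rfl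

lemma play_succ (f : List V → V → V) (s : V) (m : ℕ) :
    play f s (m + 1) = f (hist (play f s) m) (play f s m) := by
  show (playP f s (m+1)).2 = _
  rw [show (playP f s (m+1)).2 = f (playP f s m).1 (playP f s m).2 from rfl, playP_fst]
  rfl

lemma isPlay_play {A : Arena V} {f : List V → V → V} (hf : ∀ h v, A.E v (f h v)) (s : V) :
    IsPlay A s (play f s) :=
  ⟨rfl, fun i => by rw [play_succ]; exact hf _ _⟩

lemma consistentEve_play {A : Arena V} {σ : Strategy V} {f : List V → V → V}
    (hf : ∀ h v, v ∈ A.VEve → f h v = σ h v) (s : V) : ConsistentEve A σ (play f s) := by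
  intro i hi
  rw [play_succ, hf _ _ hi]


noncomputable def escFun (A : Arena V) (T : Set V) (σ : Strategy V) : List V → V → V :=
  fun h v =>
    if v ∈ A.VEve then σ h v
    else if hw : ∃ w, A.E v w ∧ w ∉ Attr A T then hw.choose
    else (A.succ_nonempty v).choose

lemma escFun_eve {A : Arena V} (T : Set V) (σ : Strategy V) (h : List V) {v : V}
    (hv : v ∈ A.VEve) : escFun A T σ h v = σ h v := by
  simp only [escFun, if_pos hv]

lemma escFun_valid {A : Arena V} (T : Set V) {σ : Strategy V} (hσ : ValidStrategy A σ)
    (h : List V) (v : V) : A.E v (escFun A T σ h v) := by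
  unfold escFun
  split
  · exact hσ h v
  · split
    · next hw => exact hw.choose_spec.1
    · exact (A.succ_nonempty v).choose_spec

lemma escFun_adam {A : Arena V} {T : Set V} (σ : Strategy V) (h : List V) {v : V}
    (hv : v ∉ A.VEve) (hA : v ∉ Attr A T) : escFun A T σ h v ∉ Attr A T := by
  have hex := adam_escape hv hA
  simp only [escFun, if_neg hv, dif_pos hex]
  exact hex.choose_spec.2

lemma mem_attr_of_wins {A : Arena V} {T : Set V} {σ : Strategy V} (hσ : ValidStrategy A σ)
    {s : V} (hwin : ∀ p, IsPlay A s p → ConsistentEve A σ p → Visits p T) :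
    s ∈ Attr A T := by
  by_contra hs
  set f := escFun A T σ with hfdef
  have hfeve : ∀ h v, v ∈ A.VEve → f h v = σ h v := fun h v hv => escFun_eve T σ h hv
  set p := play f s with hp
  have hinv : ∀ m, p m ∉ Attr A T := by
    intro m
    induction m with
    | zero => exact hs
    | succ m ih =>
      rw [hp, play_succ, ← hp]
      by_cases hv : p m ∈ A.VEve
      · rw [hfeve _ _ hv]
        exact eve_escape hv ih (hσ _ _)
      · exact escFun_adam σ _ hv ih
  obtain ⟨k, hk⟩ := hwin p (isPlay_play (fun h v => escFun_valid T hσ h v) s)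
    (consistentEve_play hfeve s)
  exact hinv k (subset_attr A T hk)

noncomputable def cmpFun (A : Arena V) (a b : V) (σ : Strategy V) : List V → V → V :=
  fun h v =>
    if v ∈ A.VEve then σ h v
    else if h1 : (a ∈ v :: h ∧ b ∉ v :: h) ∧ ∃ w, A.E v w ∧ w ∉ Attr A ({b} : Set V) then
      h1.2.choose
    else if h2 : (b ∈ v :: h ∧ a ∉ v :: h) ∧ ∃ w, A.E v w ∧ w ∉ Attr A ({a} : Set V) then
      h2.2.choose
    else (A.succ_nonempty v).choose

lemma cmpFun_valid {A : Arena V} (a b : V) {σ : Strategy V} (hσ : ValidStrategy A σ)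
    (h : List V) (v : V) : A.E v (cmpFun A a b σ h v) := by
  unfold cmpFun
  split
  · exact hσ h v
  · split
    · next h1 => exact h1.2.choose_spec.1
    · split
      · next h2 => exact h2.2.choose_spec.1
      · exact (A.succ_nonempty v).choose_spec

lemma cmpFun_eve {A : Arena V} (a b : V) (σ : Strategy V) (h : List V) {v : V}
    (hv : v ∈ A.VEve) : cmpFun A a b σ h v = σ h v := by
  simp only [cmpFun, if_pos hv]

lemma cmpFun_adam1 {A : Arena V} {a b : V} (σ : Strategy V) {h : List V} {v : V}
    (hv : v ∉ A.VEve) (ha : a ∈ v :: h) (hb : b ∉ v :: h) (hA : v ∉ Attr A ({b} : Set V)) :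
    cmpFun A a b σ h v ∉ Attr A ({b} : Set V) := by
  have hex : (a ∈ v :: h ∧ b ∉ v :: h) ∧ ∃ w, A.E v w ∧ w ∉ Attr A ({b} : Set V) :=
    ⟨⟨ha, hb⟩, adam_escape hv hA⟩
  simp only [cmpFun, if_neg hv, dif_pos hex]
  exact hex.2.choose_spec.2

lemma cmpFun_adam2 {A : Arena V} {a b : V} (σ : Strategy V) {h : List V} {v : V}
    (hv : v ∉ A.VEve) (hb : b ∈ v :: h) (ha : a ∉ v :: h) (hA : v ∉ Attr A ({a} : Set V)) :
    cmpFun A a b σ h v ∉ Attr A ({a} : Set V) := by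
  have hn1 : ¬((a ∈ v :: h ∧ b ∉ v :: h) ∧ ∃ w, A.E v w ∧ w ∉ Attr A ({b} : Set V)) :=
    fun hc => hc.1.2 hb
  have hex : (b ∈ v :: h ∧ a ∉ v :: h) ∧ ∃ w, A.E v w ∧ w ∉ Attr A ({a} : Set V) :=
    ⟨⟨hb, ha⟩, adam_escape hv hA⟩
  simp only [cmpFun, if_neg hv, dif_neg hn1, dif_pos hex]
  exact hex.2.choose_spec.2

lemma mem_cons_hist {p : ℕ → V} {m : ℕ} {a : V} :
    a ∈ p m :: hist p m ↔ ∃ k, k ≤ m ∧ p k = a := by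
  simp only [List.mem_cons, mem_hist]
  constructor
  · rintro (h | ⟨k, hk, hp⟩)
    · exact ⟨m, le_refl m, h.symm⟩
    · exact ⟨k, le_of_lt hk, hp⟩
  · rintro ⟨k, hk, hp⟩
    rcases Nat.eq_or_lt_of_le hk with h | h
    · subst h; exact Or.inl hp.symm
    · exact Or.inr ⟨k, h, hp⟩

lemma targets_comparable {A : Arena V} {σ : Strategy V} (hσ : ValidStrategy A σ) {s a b : V}
    (hwa : ∀ p, IsPlay A s p → ConsistentEve A σ p → Visits p ({a} : Set V))
    (hwb : ∀ p, IsPlay A s p → ConsistentEve A σ p → Visits p ({b} : Set V)) :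
    a ∈ Attr A ({b} : Set V) ∨ b ∈ Attr A ({a} : Set V) := by
  by_contra hcon
  push_neg at hcon
  obtain ⟨hab1, hab2⟩ := hcon
  have hne : a ≠ b := fun h => hab1 (h ▸ subset_attr A ({b} : Set V) rfl)
  set f := cmpFun A a b σ with hfdef
  have hfeve : ∀ h v, v ∈ A.VEve → f h v = σ h v := fun h v hv => cmpFun_eve a b σ h hv
  set p := play f s with hp
  have hplay : IsPlay A s p := isPlay_play (fun h v => cmpFun_valid a b hσ h v) s
  have hcons : ConsistentEve A σ p := consistentEve_play hfeve s
  obtain ⟨ka, hka⟩ := hwa p hplay hcons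
  obtain ⟨kb, hkb⟩ := hwb p hplay hcons
  rw [Set.mem_singleton_iff] at hka hkb
  have hex : ∃ m, p m = a ∨ p m = b := ⟨ka, Or.inl hka⟩
  set k := Nat.find hex with hkdef
  have hmin : ∀ l, l < k → p l ≠ a ∧ p l ≠ b := by
    intro l hl
    have := Nat.find_min hex hl
    push_neg at this
    exact this
  rcases Nat.find_spec hex with hk | hk
  · -- p k = a : from time k on, the play stays outside Attr {b}
    have claim : ∀ m, k ≤ m → p m ∉ Attr A ({b} : Set V) ∧ ∀ l, l ≤ m → p l ≠ b := by
      intro m hm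
      induction m, hm using Nat.le_induction with
      | base =>
        refine ⟨hk ▸ hab1, fun l hl => ?_⟩
        rcases Nat.eq_or_lt_of_le hl with h | h
        · subst h; rw [hk]; exact hne
        · exact (hmin l h).2
      | succ m hm ih =>
        obtain ⟨ih1, ih2⟩ := ih
        have hain : a ∈ p m :: hist p m := mem_cons_hist.2 ⟨k, hm, hk⟩
        have hbnotin : b ∉ p m :: hist p m := by
          intro hb
          obtain ⟨l, hl, hpl⟩ := mem_cons_hist.1 hb
          exact ih2 l hl hpl
        have hnext : p (m + 1) ∉ Attr A ({b} : Set V) := by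
          rw [hp, play_succ, ← hp]
          by_cases hv : p m ∈ A.VEve
          · rw [hfeve _ _ hv]
            exact eve_escape hv ih1 (hσ _ _)
          · exact cmpFun_adam1 σ hv hain hbnotin ih1
        refine ⟨hnext, fun l hl => ?_⟩
        rcases Nat.eq_or_lt_of_le hl with h | h
        · subst h
          exact fun hc => hnext (hc ▸ subset_attr A ({b} : Set V) rfl)
        · exact ih2 l (Nat.lt_succ_iff.1 h)
    rcases Nat.lt_or_ge kb k with h | h
    · exact (hmin kb h).2 hkb
    · exact (claim kb h).2 kb (le_refl kb) hkb
  · -- p k = b : symmetric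
    have claim : ∀ m, k ≤ m → p m ∉ Attr A ({a} : Set V) ∧ ∀ l, l ≤ m → p l ≠ a := by
      intro m hm
      induction m, hm using Nat.le_induction with
      | base =>
        refine ⟨hk ▸ hab2, fun l hl => ?_⟩
        rcases Nat.eq_or_lt_of_le hl with h | h
        · subst h; rw [hk]; exact hne.symm
        · exact (hmin l h).1
      | succ m hm ih =>
        obtain ⟨ih1, ih2⟩ := ih
        have hbin : b ∈ p m :: hist p m := mem_cons_hist.2 ⟨k, hm, hk⟩
        have hanotin : a ∉ p m :: hist p m := by
          intro hb
          obtain ⟨l, hl, hpl⟩ := mem_cons_hist.1 hb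
          exact ih2 l hl hpl
        have hnext : p (m + 1) ∉ Attr A ({a} : Set V) := by
          rw [hp, play_succ, ← hp]
          by_cases hv : p m ∈ A.VEve
          · rw [hfeve _ _ hv]
            exact eve_escape hv ih1 (hσ _ _)
          · exact cmpFun_adam2 σ hv hbin hanotin ih1
        refine ⟨hnext, fun l hl => ?_⟩
        rcases Nat.eq_or_lt_of_le hl with h | h
        · subst h
          exact fun hc => hnext (hc ▸ subset_attr A ({a} : Set V) rfl)
        · exact ih2 l (Nat.lt_succ_iff.1 h)
    rcases Nat.lt_or_ge ka k with h | h
    · exact (hmin ka h).1 hka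
    · exact (claim ka h).2 ka (le_refl ka) hka

lemma chain_min {A : Arena V} {n : ℕ} {t : Fin n → V}
    (hchain : ∀ i j : Fin n, Attr A ({t i} : Set V) ⊆ Attr A ({t j} : Set V) ∨
      Attr A ({t j} : Set V) ⊆ Attr A ({t i} : Set V))
    (U : Finset (Fin n)) (hU : U.Nonempty) :
    ∃ j, j ∈ U ∧ ∀ k ∈ U, Attr A ({t j} : Set V) ⊆ Attr A ({t k} : Set V) := by
  classical
  induction U using Finset.induction_on with
  | empty => exact absurd hU (by simp)
  | insert x U' ha ih =>
    rcases U'.eq_empty_or_nonempty with h | h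
    · subst h
      exact ⟨x, Finset.mem_insert_self x _, by
        intro k hk
        rw [Finset.mem_insert] at hk
        rcases hk with hk | hk
        · subst hk; exact subset_rfl
        · exact absurd hk (Finset.notMem_empty k)⟩
    · obtain ⟨j, hj, hjmin⟩ := ih h
      rcases hchain x j with hc | hc
      · refine ⟨x, Finset.mem_insert_self x _, fun k hk => ?_⟩
        rw [Finset.mem_insert] at hk
        rcases hk with hk | hk
        · subst hk; exact subset_rfl
        · exact hc.trans (hjmin k hk)
      · refine ⟨j, Finset.mem_insert_of_mem hj, fun k hk => ?_⟩
        rw [Finset.mem_insert] at hk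
        rcases hk with hk | hk
        · subst hk; exact hc
        · exact hjmin k hk

noncomputable def core (A : Arena V) {n : ℕ} (t : Fin n → V) (U : Finset (Fin n)) (v : V) :
    V :=
  if hU : ∃ j, j ∈ U ∧ ∀ k ∈ U, Attr A ({t j} : Set V) ⊆ Attr A ({t k} : Set V) then
    if hw : ∃ w, A.E v w ∧
        w ∈ AttrN A ({t hU.choose} : Set V) (rk A ({t hU.choose} : Set V) v - 1) then
      hw.choose
    else (A.succ_nonempty v).choose
  else (A.succ_nonempty v).choose

lemma core_valid (A : Arena V) {n : ℕ} (t : Fin n → V) (U : Finset (Fin n)) (v : V) :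
    A.E v (core A t U v) := by
  unfold core
  split
  · split
    · next hw => exact hw.choose_spec.1
    · exact (A.succ_nonempty v).choose_spec
  · exact (A.succ_nonempty v).choose_spec

lemma core_mem (A : Arena V) {n : ℕ} (t : Fin n → V) {U : Finset (Fin n)}
    (hU : ∃ j, j ∈ U ∧ ∀ k ∈ U, Attr A ({t j} : Set V) ⊆ Attr A ({t k} : Set V)) {v : V}
    (hv1 : v ∈ A.VEve) (hv2 : v ∈ Attr A ({t hU.choose} : Set V)) (hv3 : v ≠ t hU.choose) :
    core A t U v ∈ AttrN A ({t hU.choose} : Set V) (rk A ({t hU.choose} : Set V) v - 1) := by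
  have hw : ∃ w, A.E v w ∧
      w ∈ AttrN A ({t hU.choose} : Set V) (rk A ({t hU.choose} : Set V) v - 1) :=
    (attr_step hv2 (by simpa using hv3)).1 hv1
  unfold core
  rw [dif_pos hU, dif_pos hw]
  exact hw.choose_spec.2

noncomputable def unvisited {n : ℕ} (t : Fin n → V) (l : List V) : Finset (Fin n) :=
  @Finset.filter _ (fun j => t j ∉ l) (Classical.decPred _) Finset.univ

lemma mem_unvisited {n : ℕ} {t : Fin n → V} {l : List V} {j : Fin n} :
    j ∈ unvisited t l ↔ t j ∉ l := by
  simp [unvisited]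

noncomputable def eveStrat (A : Arena V) {n : ℕ} (t : Fin n → V) : Strategy V :=
  fun h v => core A t (unvisited t (v :: h)) v

lemma eve_wins_backward {A : Arena V} {n : ℕ} {t : Fin n → V} {s : V}
    (hchain : ∀ i j : Fin n, Attr A ({t i} : Set V) ⊆ Attr A ({t j} : Set V) ∨
      Attr A ({t j} : Set V) ⊆ Attr A ({t i} : Set V))
    (hs : ∀ i : Fin n, s ∈ Attr A ({t i} : Set V)) :
    ∀ p, IsPlay A s p → ConsistentEve A (eveStrat A t) p →
      ∀ i : Fin n, Visits p ({t i} : Set V) := by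
  intro p hp hcons
  have hinv : ∀ m, ∀ j : Fin n, (∀ l, l ≤ m → p l ≠ t j) →
      p m ∈ Attr A ({t j} : Set V) := by
    intro m
    induction m with
    | zero => intro j _; rw [hp.1]; exact hs j
    | succ m ih =>
      intro j hj
      have hjm : ∀ l, l ≤ m → p l ≠ t j := fun l hl => hj l (le_trans hl (Nat.le_succ m))
      have hpmj : p m ∈ Attr A ({t j} : Set V) := ih j hjm
      have hpm_ne : p m ≠ t j := hj m (Nat.le_succ m)
      by_cases hv : p m ∈ A.VEve
      · have hstep := hcons m hv
        set U := unvisited t (p m :: hist p m) with hUdef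
        have hUj : j ∈ U := mem_unvisited.2 (fun hc => by
          obtain ⟨l, hl, hpl⟩ := mem_cons_hist.1 hc; exact hjm l hl hpl)
        have hUex : ∃ j', j' ∈ U ∧ ∀ k ∈ U,
            Attr A ({t j'} : Set V) ⊆ Attr A ({t k} : Set V) :=
          chain_min hchain U ⟨j, hUj⟩
        obtain ⟨hj'U, hj'min⟩ := hUex.choose_spec
        have hj'm : ∀ l, l ≤ m → p l ≠ t hUex.choose := by
          intro l hl hc
          exact (mem_unvisited.1 hj'U) (mem_cons_hist.2 ⟨l, hl, hc⟩)
        have h1 : p m ∈ Attr A ({t hUex.choose} : Set V) := ih _ hj'm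
        have h2 : p m ≠ t hUex.choose := hj'm m le_rfl
        have hmem := core_mem A t hUex hv h1 h2
        have hcore : p (m + 1) = core A t U (p m) := hstep
        rw [hcore]
        exact hj'min j hUj (attrN_subset_attr _ _ _ hmem)
      · have := (attr_step hpmj (by simpa using hpm_ne)).2 hv (p (m + 1)) (hp.2 m)
        exact attrN_subset_attr _ _ _ this
  intro i
  by_contra hivis
  classical
  set B := @Finset.filter _ (fun j => ∀ m, p m ≠ t j) (Classical.decPred _)
    (Finset.univ : Finset (Fin n)) with hBdef
  have hmemB : ∀ j, j ∈ B ↔ ∀ m, p m ≠ t j := by intro j; simp [hBdef]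
  have hiB : i ∈ B := (hmemB i).2 (fun m hc => hivis ⟨m, by simp [hc]⟩)
  set g : Fin n → ℕ := fun j => if hj : ∃ m, p m = t j then Nat.find hj else 0 with hgdef
  set M := Finset.univ.sup g with hMdef
  have hUeq : ∀ m, M ≤ m → unvisited t (p m :: hist p m) = B := by
    intro m hm
    apply Finset.ext
    intro j
    rw [mem_unvisited, hmemB]
    constructor
    · intro h m' hc
      have hj : ∃ m'', p m'' = t j := ⟨m', hc⟩
      have hgj : g j = Nat.find hj := by rw [hgdef]; exact dif_pos hj
      have hspec : p (g j) = t j := by rw [hgj]; exact Nat.find_spec hj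
      have hle : g j ≤ m := le_trans (le_trans (Finset.le_sup (Finset.mem_univ j)) hm)
        (le_refl m)
      exact h (mem_cons_hist.2 ⟨g j, hle, hspec⟩)
    · intro h hc
      obtain ⟨l, _, hpl⟩ := mem_cons_hist.1 hc
      exact h l hpl
  have hBU : ∃ j, j ∈ B ∧ ∀ k ∈ B, Attr A ({t j} : Set V) ⊆ Attr A ({t k} : Set V) :=
    chain_min hchain B ⟨i, hiB⟩
  obtain ⟨hjmB, hjmmin⟩ := hBU.choose_spec
  have hjm_never : ∀ m, p m ≠ t hBU.choose := (hmemB _).1 hjmB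
  have hdec : ∀ m, M ≤ m →
      rk A ({t hBU.choose} : Set V) (p (m + 1)) < rk A ({t hBU.choose} : Set V) (p m) := by
    intro m hm
    have h1 : p m ∈ Attr A ({t hBU.choose} : Set V) := hinv m _ (fun l _ => hjm_never l)
    have h2 : p m ∉ ({t hBU.choose} : Set V) := by simpa using hjm_never m
    by_cases hv : p m ∈ A.VEve
    · have hstep := hcons m hv
      have hcore : p (m + 1) = core A t (unvisited t (p m :: hist p m)) (p m) := hstep
      rw [hUeq m hm] at hcore
      have hmem := core_mem A t hBU hv h1 (hjm_never m)
      rw [hcore]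
      exact rk_lt h1 h2 hmem
    · exact rk_lt h1 h2 ((attr_step h1 h2).2 hv (p (m + 1)) (hp.2 m))
  have habs : ∀ d, rk A ({t hBU.choose} : Set V) (p (M + d)) + d ≤
      rk A ({t hBU.choose} : Set V) (p M) := by
    intro d
    induction d with
    | zero => simp
    | succ d ih =>
      have hstep := hdec (M + d) (Nat.le_add_right M d)
      have : M + (d + 1) = (M + d) + 1 := rfl
      rw [this]
      omega
  have := habs (rk A ({t hBU.choose} : Set V) (p M) + 1)
  omega

end GR

/-- with only singleton targets `{t 1}, ..., {t n}`, Eve wins iff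
the attractors of the targets form a chain under inclusion and the start
vertex lies in all of them. -/
theorem genReach_singletons_iff (A : Arena V) (s : V) (n : ℕ) (t : Fin n → V) :
    EveWins A s (fun i : Fin n => ({t i} : Set V)) ↔
      (∀ i j : Fin n,
          Attr A ({t i} : Set V) ⊆ Attr A ({t j} : Set V) ∨
          Attr A ({t j} : Set V) ⊆ Attr A ({t i} : Set V)) ∧
      (∀ i : Fin n, s ∈ Attr A ({t i} : Set V)) := by
  constructor
  · rintro ⟨σ, hσ, hwin⟩
    constructor
    · intro i j
      rcases GR.targets_comparable hσ (fun p hp hc => hwin p hp hc i)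
          (fun p hp hc => hwin p hp hc j) with h | h
      · exact Or.inl (GR.attr_trans (Set.singleton_subset_iff.2 h))
      · exact Or.inr (GR.attr_trans (Set.singleton_subset_iff.2 h))
    · intro i
      exact GR.mem_attr_of_wins hσ (fun p hp hc => hwin p hp hc i)
  · rintro ⟨hchain, hs⟩
    exact ⟨GR.eveStrat A t, fun h v => GR.core_valid A t _ v, GR.eve_wins_backward hchain hs⟩
end

section
/- Consider a generalised reachability game on a game arena with start vertex s whose target sets are a set F_0 ⊆ V together with the singletons {t_1}, ..., {t_k}, and write A_i = Attr({t_i}) for 1 ≤ i ≤ k. Then Eve wins the game if and only if there is a permutation π of {1, ..., k} such that, setting A_{π(0)} := V and t_{π(k+1)} := s: (1) A_{π(k)} ⊆ A_{π(k-1)} ⊆ ... ⊆ A_{π(1)}; (2) s ∈ A_{π(k)}; and (3) there exists i ∈ {0, 1, ..., k} with t_{π(i+1)} ∈ Attr(A_{π(i)} ∩ F_0). -/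
variable {V : Type*} [Fintype V]

/-- The extended sequence of attractor sets `A_{π(i)}` for `1 ≤ i ≤ k`,
with the convention `A_{π(0)} = V` (and `univ` for out-of-range indices). -/
def extA (A : Arena V) {k : ℕ} (t : Fin k → V) (π : Equiv.Perm (Fin k))
    (i : ℕ) : Set V :=
  if h : 1 ≤ i ∧ i ≤ k then Attr A ({t (π ⟨i - 1, by omega⟩)} : Set V)
  else Set.univ

/-- The extended sequence of target vertices `t_{π(i)}` for `1 ≤ i ≤ k`,
with the convention `t_{π(k+1)} = s` (and `s` for out-of-range indices). -/
def extT {k : ℕ} (t : Fin k → V) (π : Equiv.Perm (Fin k)) (s : V) (i : ℕ) : V :=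
  if h : 1 ≤ i ∧ i ≤ k then t (π ⟨i - 1, by omega⟩) else s


open Classical

section Basic
variable {V : Type*} [Fintype V] (A : Arena V) (S : Set V)

lemma attrN_succ (n : ℕ) : AttrN A S (n+1) = AttrN A S n ∪ {u | u ∈ A.VEve ∧ ∃ v, A.E u v ∧ v ∈ AttrN A S n}
      ∪ {u | u ∉ A.VEve ∧ ∀ v, A.E u v → v ∈ AttrN A S n} := rfl

lemma attrN_mono_succ (n : ℕ) : AttrN A S n ⊆ AttrN A S (n+1) := by
  rw [attrN_succ]; exact fun x hx => Or.inl (Or.inl hx)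

lemma attrN_mono {m n : ℕ} (h : m ≤ n) : AttrN A S m ⊆ AttrN A S n := by
  induction n with
  | zero => have : m = 0 := by omega
            subst this; exact le_rfl
  | succ n ih =>
    rcases Nat.lt_or_ge m (n+1) with h'|h'
    · exact (ih (by omega)).trans (attrN_mono_succ A S n)
    · have : m = n+1 := by omega
      subst this; exact le_rfl

lemma subset_attr : S ⊆ Attr A S := fun x hx => Set.mem_iUnion.2 ⟨0, hx⟩

lemma mem_attr {v : V} : v ∈ Attr A S ↔ ∃ n, v ∈ AttrN A S n := Set.mem_iUnion

lemma exists_uniform_attrN {v : V} (h : ∀ w, A.E v w → w ∈ Attr A S) :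
    ∃ n, ∀ w, A.E v w → w ∈ AttrN A S n := by
  classical
  refine ⟨Finset.univ.sup (fun w : V => if hw : w ∈ Attr A S then Nat.find ((mem_attr A S).1 hw) else 0), ?_⟩
  intro w hw
  have hw' := h w hw
  have : w ∈ AttrN A S (Nat.find ((mem_attr A S).1 hw')) := Nat.find_spec ((mem_attr A S).1 hw')
  refine attrN_mono A S ?_ this
  have := Finset.le_sup (f := fun w : V => if hw : w ∈ Attr A S then Nat.find ((mem_attr A S).1 hw) else 0)
    (Finset.mem_univ w)
  simpa [hw'] using this

lemma eve_trap {v w : V} (hv : v ∉ Attr A S) (hve : v ∈ A.VEve) (hE : A.E v w) : w ∉ Attr A S := by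
  intro hw
  rcases (mem_attr A S).1 hw with ⟨n, hn⟩
  exact hv ((mem_attr A S).2 ⟨n+1, Or.inl (Or.inr ⟨hve, w, hE, hn⟩)⟩)

lemma adam_escape {v : V} (hv : v ∉ Attr A S) (hve : v ∉ A.VEve) :
    ∃ w, A.E v w ∧ w ∉ Attr A S := by
  by_contra h
  push_neg at h
  rcases exists_uniform_attrN A S h with ⟨n, hn⟩
  exact hv ((mem_attr A S).2 ⟨n+1, Or.inr ⟨hve, hn⟩⟩)

lemma attr_mono {S T : Set V} (h : S ⊆ T) : Attr A S ⊆ Attr A T := by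
  have key : ∀ n, AttrN A S n ⊆ AttrN A T n := by
    intro n
    induction n with
    | zero => exact h
    | succ n ih =>
      rintro x (((hx|⟨h1,v,h2,h3⟩)|⟨h1,h2⟩))
      · exact Or.inl (Or.inl (ih hx))
      · exact Or.inl (Or.inr ⟨h1, v, h2, ih h3⟩)
      · exact Or.inr ⟨h1, fun v hv => ih (h2 v hv)⟩
  rintro x hx
  rcases (mem_attr A S).1 hx with ⟨n, hn⟩
  exact (mem_attr A T).2 ⟨n, key n hn⟩

lemma attr_attr : Attr A (Attr A S) = Attr A S := by
  have key : ∀ n x, x ∈ AttrN A (Attr A S) n → x ∈ Attr A S := by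
    intro n
    induction n with
    | zero => exact fun x hx => hx
    | succ n ih =>
      rintro x (((hx'|⟨h1,v,h2,h3⟩)|⟨h1,h2⟩))
      · exact ih x hx'
      · have hv := ih v h3
        rcases (mem_attr A S).1 hv with ⟨m, hm⟩
        exact (mem_attr A S).2 ⟨m+1, Or.inl (Or.inr ⟨h1, v, h2, hm⟩)⟩
      · have : ∀ w, A.E x w → w ∈ Attr A S := fun w hw => ih w (h2 w hw)
        rcases exists_uniform_attrN A S this with ⟨m, hm⟩
        exact (mem_attr A S).2 ⟨m+1, Or.inr ⟨h1, hm⟩⟩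
  apply le_antisymm
  · rintro x hx
    rcases (mem_attr A (Attr A S)).1 hx with ⟨n, hn⟩
    exact key n x hn
  · exact attr_mono A (subset_attr A S)

lemma attr_subset_of_mem {a : V} {T : Set V} (h : a ∈ Attr A T) :
    Attr A {a} ⊆ Attr A T := by
  have : Attr A {a} ⊆ Attr A (Attr A T) := attr_mono A (by simpa using h)
  rwa [attr_attr] at this

end Basic
section Hist
variable {V : Type*}

lemma hist_zero (p : ℕ → V) : hist p 0 = [] := rfl

lemma hist_succ (p : ℕ → V) (i : ℕ) : hist p (i+1) = hist p i ++ [p i] := by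
  rw [hist, List.ofFn_succ', List.concat_eq_append]
  congr 1

lemma hist_length (p : ℕ → V) (i : ℕ) : (hist p i).length = i := by simp [hist]

lemma mem_hist {p : ℕ → V} {i : ℕ} {x : V} : x ∈ hist p i ↔ ∃ l, l < i ∧ p l = x := by
  simp [hist, List.mem_ofFn, Set.mem_range]
  constructor
  · rintro ⟨⟨l, hl⟩, h⟩; exact ⟨l, hl, h⟩
  · rintro ⟨l, hl, h⟩; exact ⟨⟨l, hl⟩, h⟩

lemma hist_get {p : ℕ → V} {i n : ℕ} (hh : n < (hist p i).length) :
    (hist p i).get ⟨n, hh⟩ = p n := by simp [hist]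

lemma hist_take (p : ℕ → V) {j i : ℕ} (h : j ≤ i) :
    (hist p i).take j = hist p j := by
  apply List.ext_getElem
  · simp [hist]; omega
  · intro n h1 h2
    simp [hist, List.getElem_take]

lemma hist_drop (p : ℕ → V) (n j : ℕ) :
    (hist p (n + j)).drop n = hist (fun l => p (n + l)) j := by
  induction j with
  | zero => simp [hist]
  | succ j ih =>
    rw [show n + (j+1) = (n+j)+1 by omega, hist_succ, List.drop_append_of_le_length (by simp [hist]), ih, hist_succ]

lemma hist_congr {p q : ℕ → V} {i : ℕ} (h : ∀ l, l < i → p l = q l) : hist p i = hist q i := by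
  simp only [hist]
  congr 1
  funext j
  exact h j j.2

end Hist
section AttrStrat
variable {V : Type*} [Fintype V]

/-- A positional strategy realising the attractor. -/
noncomputable def attrStrat (A : Arena V) (S : Set V) : Strategy V := fun _ v =>
  if H : ∃ w, A.E v w ∧ ∃ n, w ∈ AttrN A S n ∧ v ∉ AttrN A S n then H.choose
  else (A.succ_nonempty v).choose

lemma attrStrat_valid (A : Arena V) (S : Set V) : ValidStrategy A (attrStrat A S) := by
  intro h v
  unfold attrStrat
  split
  · next H => exact H.choose_spec.1
  · exact (A.succ_nonempty v).choose_spec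

lemma attrStrat_forces (A : Arena V) (S : Set V) : ∀ (n : ℕ) (p : ℕ → V),
    (∀ i, A.E (p i) (p (i+1))) →
    (∀ i, p i ∈ A.VEve → p (i+1) = attrStrat A S (hist p i) (p i)) →
    p 0 ∈ AttrN A S n → ∃ m, m ≤ n ∧ p m ∈ S := by
  intro n
  induction n with
  | zero => exact fun p _ _ h0 => ⟨0, le_rfl, h0⟩
  | succ n ih =>
    intro p hp hc h0
    by_cases hS : p 0 ∈ S
    · exact ⟨0, Nat.zero_le _, hS⟩
    · have hex : ∃ m, p 0 ∈ AttrN A S m := ⟨n+1, h0⟩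
      set n₀ := Nat.find hex with hn₀
      have hmem : p 0 ∈ AttrN A S n₀ := Nat.find_spec hex
      have hn₀pos : 1 ≤ n₀ := by
        rcases Nat.eq_zero_or_pos n₀ with h|h
        · rw [h] at hmem; exact absurd hmem hS
        · exact h
      have hnotmem : p 0 ∉ AttrN A S (n₀ - 1) := Nat.find_min hex (by omega)
      have hle : n₀ ≤ n + 1 := Nat.find_min' hex h0
      have hstep : p 1 ∈ AttrN A S n := by
        have hmem' : p 0 ∈ AttrN A S ((n₀-1)+1) := by
          have : (n₀-1)+1 = n₀ := by omega
          rw [this]; exact hmem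
        rcases hmem' with ((h'|⟨h1,v,h2,h3⟩)|⟨h1,h2⟩)
        · exact absurd h' hnotmem
        · -- Eve's move
          have hc0 := hc 0 h1
          have H : ∃ w, A.E (p 0) w ∧ ∃ m, w ∈ AttrN A S m ∧ p 0 ∉ AttrN A S m :=
            ⟨v, h2, n₀ - 1, h3, hnotmem⟩
          have : attrStrat A S (hist p 0) (p 0) = H.choose := by
            unfold attrStrat; rw [dif_pos H]
          rw [this] at hc0
          obtain ⟨hE, m, hw, hv⟩ := H.choose_spec
          have hmlt : m ≤ n₀ - 1 := by
            by_contra hcon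
            exact hv (attrN_mono A S (by omega) hmem)
          rw [hc0]
          exact attrN_mono A S (by omega) hw
        · have := h2 (p 1) (hp 0)
          exact attrN_mono A S (by omega) this
      have hq := ih (fun i => p (i+1)) (fun i => hp (i+1)) ?_ hstep
      · rcases hq with ⟨m, hm, hmS⟩
        exact ⟨m+1, by omega, hmS⟩
      · intro i hi
        exact hc (i+1) hi

lemma attr_strat_reach (A : Arena V) (S : Set V) (p : ℕ → V)
    (hp : ∀ i, A.E (p i) (p (i+1)))
    (hc : ∀ i, p i ∈ A.VEve → p (i+1) = attrStrat A S (hist p i) (p i))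
    (h0 : p 0 ∈ Attr A S) : ∃ m, p m ∈ S := by
  rcases (mem_attr A S).1 h0 with ⟨n, hn⟩
  rcases attrStrat_forces A S n p hp hc hn with ⟨m, _, hm⟩
  exact ⟨m, hm⟩

/-- The play obtained from Eve's strategy σ and Adam's choice function f. -/
noncomputable def advTraj (A : Arena V) (σ f : Strategy V) (s : V) : ℕ → V × List V
  | 0 => (s, [])
  | i+1 =>
    let vh := advTraj A σ f s i
    (if vh.1 ∈ A.VEve then σ vh.2 vh.1 else f vh.2 vh.1, vh.2 ++ [vh.1])

noncomputable def advPlay (A : Arena V) (σ f : Strategy V) (s : V) (i : ℕ) : V :=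
  (advTraj A σ f s i).1

lemma advTraj_snd (A : Arena V) (σ f : Strategy V) (s : V) (i : ℕ) :
    (advTraj A σ f s i).2 = hist (advPlay A σ f s) i := by
  induction i with
  | zero => rfl
  | succ i ih => rw [hist_succ, ← ih]; rfl

lemma advPlay_zero (A : Arena V) (σ f : Strategy V) (s : V) : advPlay A σ f s 0 = s := rfl

lemma advPlay_succ (A : Arena V) (σ f : Strategy V) (s : V) (i : ℕ) :
    advPlay A σ f s (i+1) =
      if advPlay A σ f s i ∈ A.VEve then σ (hist (advPlay A σ f s) i) (advPlay A σ f s i)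
      else f (hist (advPlay A σ f s) i) (advPlay A σ f s i) := by
  show (advTraj A σ f s (i+1)).1 = _
  rw [advTraj]
  simp only [← advTraj_snd]
  rfl

lemma advPlay_isPlay (A : Arena V) (σ f : Strategy V) (s : V)
    (hσ : ValidStrategy A σ) (hf : ValidStrategy A f) :
    IsPlay A s (advPlay A σ f s) := by
  refine ⟨rfl, fun i => ?_⟩
  rw [advPlay_succ]
  split
  · exact hσ _ _
  · exact hf _ _

lemma advPlay_consistent (A : Arena V) (σ f : Strategy V) (s : V) :
    ConsistentEve A σ (advPlay A σ f s) := by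
  intro i hi
  rw [advPlay_succ, if_pos hi]

lemma advPlay_adam (A : Arena V) (σ f : Strategy V) (s : V) (i : ℕ)
    (hi : advPlay A σ f s i ∉ A.VEve) :
    advPlay A σ f s (i+1) = f (hist (advPlay A σ f s) i) (advPlay A σ f s i) := by
  rw [advPlay_succ, if_neg hi]

end AttrStrat
section Comp
variable {V : Type*} [Fintype V]

lemma reindex_wins {ι κ : Type*} (A : Arena V) (s : V) {F : ι → Set V} {G : κ → Set V}
    (h : ∀ j, ∃ i, F i ⊆ G j) (hw : EveWins A s F) : EveWins A s G := by
  obtain ⟨σ, hv, hσ⟩ := hw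
  refine ⟨σ, hv, fun p hp hc j => ?_⟩
  obtain ⟨i, hi⟩ := h j
  obtain ⟨m, hm⟩ := hσ p hp hc i
  exact ⟨m, hi hm⟩

noncomputable def comboStrat (A : Arena V) (S : Set V) (σsub : V → Strategy V) : Strategy V :=
  fun h v =>
    if H : ∃ n, ∃ hn : n < (h ++ [v]).length, (h ++ [v]).get ⟨n, hn⟩ ∈ S then
      σsub ((h ++ [v]).get ⟨Nat.find H, (Nat.find_spec H).choose⟩) (h.drop (Nat.find H)) v
    else attrStrat A S h v

lemma comp_wins {ι : Type*} (A : Arena V) (s : V) (S : Set V) (F : ι → Set V)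
    (hS : s ∈ Attr A S) (hw : ∀ w ∈ S, EveWins A w F) :
    EveWins A s (fun o : Option ι => o.elim S F) := by
  classical
  have hsub : ∀ w : V, ∃ σ : Strategy V, ValidStrategy A σ ∧
      (w ∈ S → ∀ p, IsPlay A w p → ConsistentEve A σ p → ∀ i, Visits p (F i)) := by
    intro w
    by_cases h : w ∈ S
    · obtain ⟨σ, h1, h2⟩ := hw w h
      exact ⟨σ, h1, fun _ => h2⟩
    · exact ⟨attrStrat A S, attrStrat_valid A S, fun h' => absurd h' h⟩
  choose σsub hsubv hsubw using hsub
  set σ := comboStrat A S σsub with hσdef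
  have hval : ValidStrategy A σ := by
    intro h v
    rw [hσdef]
    unfold comboStrat
    split
    · exact hsubv _ _ _
    · exact attrStrat_valid A S h v
  refine ⟨σ, hval, fun p hp hc => ?_⟩
  have hex : ∃ n, p n ∈ S := by
    by_contra hcon
    push_neg at hcon
    have hcatt : ∀ i, p i ∈ A.VEve → p (i+1) = attrStrat A S (hist p i) (p i) := by
      intro i hi
      rw [hc i hi, hσdef]
      unfold comboStrat
      rw [dif_neg]
      push_neg
      intro n hn
      have hget : (hist p i ++ [p i]).get ⟨n, hn⟩ = p n := by
        rw [List.get_of_eq (hist_succ p i).symm, hist_get]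
      rw [hget]
      exact hcon n
    obtain ⟨m, hm⟩ := attr_strat_reach A S p hp.2 hcatt (hp.1 ▸ hS)
    exact hcon m hm
  set n₀ := Nat.find hex with hn₀def
  have hn₀S : p n₀ ∈ S := Nat.find_spec hex
  have hn₀min : ∀ l, l < n₀ → p l ∉ S := fun l hl => Nat.find_min hex hl
  set q : ℕ → V := fun j => p (n₀ + j) with hqdef
  have hq : IsPlay A (p n₀) q := by
    refine ⟨rfl, fun i => ?_⟩
    show A.E (p (n₀ + i)) (p (n₀ + (i+1)))
    rw [show n₀ + (i+1) = (n₀ + i) + 1 by omega]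
    exact hp.2 _
  have hqc : ConsistentEve A (σsub (p n₀)) q := by
    intro j hj
    have hj' : p (n₀ + j) ∈ A.VEve := hj
    have hcj := hc (n₀ + j) hj'
    have hL : hist p (n₀ + j) ++ [p (n₀ + j)] = hist p (n₀ + j + 1) := (hist_succ p (n₀ + j)).symm
    have hget : ∀ (n : ℕ) (hn : n < (hist p (n₀+j) ++ [p (n₀+j)]).length),
        (hist p (n₀+j) ++ [p (n₀+j)]).get ⟨n, hn⟩ = p n := by
      intro n hn
      rw [List.get_of_eq hL, hist_get]
    have hlen : n₀ < (hist p (n₀+j) ++ [p (n₀+j)]).length := by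
      rw [hL, hist_length]; omega
    have HP : ∃ hn : n₀ < (hist p (n₀+j) ++ [p (n₀+j)]).length,
        (hist p (n₀+j) ++ [p (n₀+j)]).get ⟨n₀, hn⟩ ∈ S := ⟨hlen, by rw [hget]; exact hn₀S⟩
    have H : ∃ n, ∃ hn : n < (hist p (n₀+j) ++ [p (n₀+j)]).length,
        (hist p (n₀+j) ++ [p (n₀+j)]).get ⟨n, hn⟩ ∈ S := ⟨n₀, HP⟩
    have hfind : Nat.find H = n₀ := by
      apply le_antisymm (Nat.find_min' H HP)
      obtain ⟨hn1, hmem1⟩ := Nat.find_spec H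
      rw [hget _ hn1] at hmem1
      exact Nat.find_min' hex hmem1
    have heval : σ (hist p (n₀+j)) (p (n₀+j)) =
        σsub (p (Nat.find H)) ((hist p (n₀+j)).drop (Nat.find H)) (p (n₀+j)) := by
      rw [hσdef]
      unfold comboStrat
      rw [dif_pos H, hget]
    show p (n₀ + j + 1) = σsub (p n₀) (hist q j) (q j)
    rw [hcj, heval, hfind, hist_drop p n₀ j]
  have hqw := hsubw (p n₀) hn₀S q hq hqc
  rintro (_|i)
  · exact ⟨n₀, hn₀S⟩
  · obtain ⟨m, hm⟩ := hqw i
    exact ⟨n₀ + m, hm⟩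

end Comp
section Chain
variable {V : Type*} [Fintype V]

lemma wins_empty (A : Arena V) (s : V) (W : Fin 0 → Set V) : EveWins A s W :=
  ⟨attrStrat A ∅, attrStrat_valid A ∅, fun _ _ _ i => i.elim0⟩

lemma chain_wins (A : Arena V) : ∀ (m : ℕ) (W : ℕ → Set V) (s : V),
    (m = 0 ∨ s ∈ Attr A (W 0)) →
    (∀ n, n + 1 < m → ∀ v ∈ W n, v ∈ Attr A (W (n+1))) →
    EveWins A s (fun n : Fin m => W n) := by
  intro m
  induction m with
  | zero => exact fun W s _ _ => wins_empty A s _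
  | succ m ih =>
    intro W s hs hchain
    have hs' : s ∈ Attr A (W 0) := by
      rcases hs with h|h
      · omega
      · exact h
    have hsub : ∀ w ∈ W 0, EveWins A w (fun n : Fin m => W (n+1)) := by
      intro w hw
      refine ih (fun n => W (n+1)) w ?_ ?_
      · rcases Nat.eq_zero_or_pos m with h|h
        · exact Or.inl h
        · exact Or.inr (hchain 0 (by omega) w hw)
      · intro n hn v hv
        exact hchain (n+1) (by omega) v hv
    have := comp_wins A s (W 0) (fun n : Fin m => W (n+1)) hs' hsub
    refine reindex_wins A s ?_ this
    intro j
    refine Fin.cases ?_ ?_ j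
    · exact ⟨none, subset_rfl⟩
    · intro i
      refine ⟨some i, ?_⟩
      simp
  
end Chain
section ExtLemmas
variable {V : Type*} [Fintype V] (A : Arena V) {k : ℕ} (t : Fin k → V) (π : Equiv.Perm (Fin k)) (s : V)

lemma extA_eq {i : ℕ} (h1 : 1 ≤ i) (h2 : i ≤ k) :
    extA A t π i = Attr A {extT t π s i} := by
  rw [extA, extT, dif_pos ⟨h1, h2⟩, dif_pos ⟨h1, h2⟩]

lemma extA_zero : extA A t π 0 = Set.univ := by
  rw [extA, dif_neg]; omega

lemma extT_top : extT t π s (k+1) = s := by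
  rw [extT, dif_neg]; omega

lemma extT_mem_extA {i : ℕ} (h1 : 1 ≤ i) (h2 : i ≤ k) :
    extT t π s i ∈ extA A t π i := by
  rw [extA_eq A t π s h1 h2]
  exact subset_attr A _ rfl

end ExtLemmas

section Mpr
variable {V : Type*} [Fintype V]

lemma genReach_mpr (A : Arena V) (s : V) (F0 : Set V) (k : ℕ) (t : Fin k → V)
    (π : Equiv.Perm (Fin k))
    (hchain : ∀ i : ℕ, 1 ≤ i → i + 1 ≤ k → extA A t π (i + 1) ⊆ extA A t π i)
    (hs : s ∈ extA A t π k)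
    (istar : ℕ) (hik : istar ≤ k)
    (h3 : extT t π s (istar + 1) ∈ Attr A (extA A t π istar ∩ F0)) :
    EveWins A s (fun x : Option (Fin k) => x.elim F0 (fun i => ({t i} : Set V))) := by
  classical
  set d := k - istar with hd
  set W : ℕ → Set V := fun n =>
    if n < d then {extT t π s (k - n)}
    else if n = d then extA A t π istar ∩ F0
    else {extT t π s (k - n + 1)} with hW
  have hwin : EveWins A s (fun n : Fin (k+1) => W n) := by
    apply chain_wins
    · right
      by_cases hd0 : d = 0
      · have hik' : istar = k := by omega
        simp only [hW, hd0, Nat.sub_zero, if_true, lt_irrefl, if_false]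
        rw [hik']
        rwa [hik', extT_top t π s] at h3
      · have h1k : 1 ≤ k := by omega
        simp only [hW, if_pos (by omega : 0 < d)]
        rw [Nat.sub_zero, ← extA_eq A t π s h1k le_rfl]
        exact hs
    · intro n hn v hv
      have hnk : n < k := by omega
      by_cases hc1 : n + 1 < d
      · -- both singleton, chain step
        rw [hW] at hv ⊢
        simp only [if_pos (by omega : n < d), Set.mem_singleton_iff] at hv
        simp only [if_pos hc1]
        subst hv
        rw [← extA_eq A t π s (by omega) (by omega)]
        apply hchain (k - (n+1)) (by omega) (by omega)
        rw [show k - (n+1) + 1 = k - n by omega]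
        exact extT_mem_extA A t π s (by omega) (by omega)
      · by_cases hc2 : n + 1 = d
        · rw [hW] at hv ⊢
          simp only [if_pos (by omega : n < d), Set.mem_singleton_iff] at hv
          simp only [if_neg (by omega : ¬ n + 1 < d), if_pos hc2]
          subst hv
          rw [show k - n = istar + 1 by omega]
          exact h3
        · by_cases hc3 : n = d
          · -- from the F0 set to t_{π(istar)}
            have histar : 1 ≤ istar := by omega
            rw [hW] at hv ⊢
            simp only [if_neg (by omega : ¬ n < d), if_pos hc3] at hv
            simp only [if_neg (by omega : ¬ n + 1 < d), if_neg (by omega : n + 1 ≠ d)]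
            rw [show k - (n+1) + 1 = istar by omega, ← extA_eq A t π s histar (by omega)]
            exact hv.1
          · -- second run of singletons
            have hnd : d < n := by omega
            rw [hW] at hv ⊢
            simp only [if_neg (by omega : ¬ n < d), if_neg hc3, Set.mem_singleton_iff] at hv
            simp only [if_neg (by omega : ¬ n + 1 < d), if_neg (by omega : n + 1 ≠ d)]
            subst hv
            rw [show k - (n+1) + 1 = k - n by omega, ← extA_eq A t π s (by omega) (by omega)]
            apply hchain (k - n) (by omega) (by omega)
            rw [show k - n + 1 = k - n + 1 by rfl]
            exact extT_mem_extA A t π s (by omega) (by omega)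
  refine reindex_wins A s ?_ hwin
  rintro (_|a)
  · -- F0
    refine ⟨⟨d, by omega⟩, ?_⟩
    show W d ⊆ F0
    simp only [hW, lt_irrefl, if_false, if_true]
    exact fun x hx => hx.2
  · -- {t a}
    set jj : Fin k := π.symm a with hjj
    have hja : t (π jj) = t a := by rw [hjj, Equiv.apply_symm_apply]
    have hjk : (jj : ℕ) < k := jj.2
    have hextT : extT t π s ((jj : ℕ) + 1) = t a := by
      rw [extT, dif_pos ⟨by omega, by omega⟩, ← hja]
      congr 2
    by_cases hcase : istar ≤ (jj : ℕ)
    · refine ⟨⟨k - ((jj : ℕ) + 1), by omega⟩, ?_⟩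
      show W (k - ((jj : ℕ) + 1)) ⊆ {t a}
      simp only [hW]
      rw [if_pos (by omega : k - ((jj : ℕ) + 1) < d)]
      rw [show k - (k - ((jj : ℕ) + 1)) = (jj : ℕ) + 1 by omega, hextT]
    · refine ⟨⟨k - (jj : ℕ), by omega⟩, ?_⟩
      show W (k - (jj : ℕ)) ⊆ {t a}
      simp only [hW]
      rw [if_neg (by omega : ¬ k - (jj : ℕ) < d), if_neg (by omega : k - (jj : ℕ) ≠ d)]
      rw [show k - (k - (jj : ℕ)) + 1 = (jj : ℕ) + 1 by omega, hextT]

end Mpr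
section Forward
variable {V : Type*} [Fintype V]

/-- If Eve wins then the start vertex lies in the attractor of every target. -/
lemma start_mem_attr {ι : Type*} (A : Arena V) (s : V) (F : ι → Set V)
    (hw : EveWins A s F) (i0 : ι) : s ∈ Attr A (F i0) := by
  classical
  by_contra hcon
  obtain ⟨σ, hσv, hσw⟩ := hw
  set T := Attr A (F i0) with hT
  set f : Strategy V := fun _ v =>
    if H : ∃ w, A.E v w ∧ w ∉ T then H.choose else (A.succ_nonempty v).choose with hf
  have hfv : ValidStrategy A f := by
    intro h v
    simp only [hf]
    split
    · next H => exact H.choose_spec.1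
    · exact (A.succ_nonempty v).choose_spec
  set p := advPlay A σ f s with hp
  have hplay := advPlay_isPlay A σ f s hσv hfv
  have hcons := advPlay_consistent A σ f s
  have hinv : ∀ i, p i ∉ T := by
    intro i
    induction i with
    | zero => exact hcon
    | succ i ih =>
      by_cases hve : p i ∈ A.VEve
      · exact eve_trap A (F i0) ih hve (hplay.2 i)
      · rw [hp, advPlay_adam A σ f s i hve]
        simp only [hf]
        have H : ∃ w, A.E (advPlay A σ f s i) w ∧ w ∉ T := adam_escape A (F i0) ih hve
        rw [dif_pos H]
        exact H.choose_spec.2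
  obtain ⟨m, hm⟩ := hσw p hplay hcons i0
  exact hinv m (subset_attr A (F i0) hm)

/-- Pairwise comparability of singleton-target attractors. -/
lemma pairwise_attr {ι : Type*} (A : Arena V) (s : V) (F : ι → Set V)
    (hw : EveWins A s F) (i0 i1 : ι) (a b : V) (hFa : F i0 = {a}) (hFb : F i1 = {b}) :
    a ∈ Attr A ({b} : Set V) ∨ b ∈ Attr A ({a} : Set V) := by
  classical
  by_cases hab : a = b
  · exact Or.inl (subset_attr A _ (by rw [hab]; rfl))
  by_contra hcon
  push_neg at hcon
  obtain ⟨ha, hb⟩ := hcon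
  obtain ⟨σ, hσv, hσw⟩ := hw
  set f : Strategy V := fun h v =>
    if a ∈ (h ++ [v]) then
      (if H : ∃ w, A.E v w ∧ w ∉ Attr A ({b} : Set V) then H.choose else (A.succ_nonempty v).choose)
    else if b ∈ (h ++ [v]) then
      (if H : ∃ w, A.E v w ∧ w ∉ Attr A ({a} : Set V) then H.choose else (A.succ_nonempty v).choose)
    else (A.succ_nonempty v).choose with hf
  have hfv : ValidStrategy A f := by
    intro h v
    simp only [hf]
    split
    · split
      · next H => exact H.choose_spec.1
      · exact (A.succ_nonempty v).choose_spec
    · split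
      · split
        · next H => exact H.choose_spec.1
        · exact (A.succ_nonempty v).choose_spec
      · exact (A.succ_nonempty v).choose_spec
  set p := advPlay A σ f s with hp
  have hplay := advPlay_isPlay A σ f s hσv hfv
  have hcons := advPlay_consistent A σ f s
  have hexa : ∃ n, p n = a := by
    obtain ⟨m, hm⟩ := hσw p hplay hcons i0
    exact ⟨m, by rwa [hFa] at hm⟩
  have hexb : ∃ n, p n = b := by
    obtain ⟨m, hm⟩ := hσw p hplay hcons i1
    exact ⟨m, by rwa [hFb] at hm⟩
  set na := Nat.find hexa with hna
  set nb := Nat.find hexb with hnb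
  have hpa : p na = a := Nat.find_spec hexa
  have hpb : p nb = b := Nat.find_spec hexb
  have hane : na ≠ nb := fun h => hab (by rw [← hpa, h, hpb])
  -- membership of `a` in a history prefix
  have hmema : ∀ m, na ≤ m → a ∈ (hist p m ++ [p m]) := by
    intro m hm
    rw [← hist_succ, mem_hist]
    exact ⟨na, by omega, hpa⟩
  have hmemb : ∀ m, nb ≤ m → b ∈ (hist p m ++ [p m]) := by
    intro m hm
    rw [← hist_succ, mem_hist]
    exact ⟨nb, by omega, hpb⟩
  rcases Nat.lt_or_ge na nb with hord | hord
  · -- a visited first; afterwards the play stays outside Attr {b}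
    have hinv : ∀ m, na ≤ m → p m ∉ Attr A ({b} : Set V) := by
      intro m hm
      induction m with
      | zero =>
        have : na = 0 := by omega
        rw [show (0:ℕ) = na by omega, hpa]; exact ha
      | succ m ih =>
        rcases Nat.lt_or_ge m na with h' | h'
        · have : na = m+1 := by omega
          rw [← this, hpa]; exact ha
        · have hm' := ih h'
          by_cases hve : p m ∈ A.VEve
          · exact eve_trap A _ hm' hve (hplay.2 m)
          · rw [hp, advPlay_adam A σ f s m hve, hf]
            simp only
            rw [if_pos (hmema m h')]
            have H : ∃ w, A.E (advPlay A σ f s m) w ∧ w ∉ Attr A ({b} : Set V) :=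
              adam_escape A _ hm' hve
            rw [dif_pos H]
            exact H.choose_spec.2
    exact hinv nb (by omega) (subset_attr A _ (by rw [hpb]; rfl))
  · -- b visited first
    have hord' : nb < na := by omega
    have hinv : ∀ m, (∀ l, nb ≤ l → l ≤ m → p l ∉ Attr A ({a} : Set V)) := by
      intro m
      induction m with
      | zero =>
        intro l h1 h2
        have : l = 0 := by omega
        subst this
        have : nb = 0 := by omega
        rw [show (0:ℕ) = nb by omega, hpb]; exact hb
      | succ m ih =>
        intro l h1 h2
        rcases Nat.lt_or_ge l (m+1) with h' | h'
        · exact ih l h1 (by omega)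
        · have hl : l = m + 1 := by omega
          subst hl
          by_cases hlb : nb = m + 1
          · rw [← hlb, hpb]; exact hb
          · have hnbm : nb ≤ m := by omega
            have hm' := ih m hnbm le_rfl
            by_cases hve : p m ∈ A.VEve
            · exact eve_trap A _ hm' hve (hplay.2 m)
            · rw [hp, advPlay_adam A σ f s m hve]
              simp only [hf]
              have hnota : a ∉ (hist p m ++ [p m]) := by
                rw [← hist_succ, mem_hist]
                rintro ⟨l', hl', hpl'⟩
                have hnal : na ≤ l' := Nat.find_min' hexa hpl'
                rcases Nat.lt_or_ge l' nb with h'' | h''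
                · omega
                · exact ih l' h'' (by omega) (subset_attr A _ (by rw [hpl']; rfl))
              rw [if_neg hnota, if_pos (hmemb m hnbm)]
              have H : ∃ w, A.E (advPlay A σ f s m) w ∧ w ∉ Attr A ({a} : Set V) :=
                adam_escape A _ hm' hve
              rw [dif_pos H]
              exact H.choose_spec.2
    exact hinv na na hord'.le le_rfl (subset_attr A _ (by rw [hpa]; rfl))

end Forward
section Sorting
variable {V : Type*} [Fintype V]

lemma exists_perm_chain (A : Arena V) (s : V) (F0 : Set V) (k : ℕ) (t : Fin k → V)
    (hw : EveWins A s (fun x : Option (Fin k) => x.elim F0 (fun i => ({t i} : Set V)))) :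
    ∃ π : Equiv.Perm (Fin k),
      (∀ i : ℕ, 1 ≤ i → i + 1 ≤ k → extA A t π (i + 1) ⊆ extA A t π i) ∧
      s ∈ extA A t π k := by
  classical
  set κ : Fin k → ℕ := fun i => (Attr A ({t i} : Set V)).ncard with hκ
  set π : Equiv.Perm (Fin k) := (Fin.revPerm).trans (Tuple.sort κ) with hπ
  have hcomp : ∀ a b : Fin k, Attr A ({t a} : Set V) ⊆ Attr A ({t b} : Set V) ∨
      Attr A ({t b} : Set V) ⊆ Attr A ({t a} : Set V) := by
    intro a b
    rcases pairwise_attr A s _ hw (some a) (some b) (t a) (t b) rfl rfl with h|h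
    · exact Or.inl (attr_subset_of_mem A h)
    · exact Or.inr (attr_subset_of_mem A h)
  have hmono : ∀ a b : Fin k, κ a ≤ κ b → Attr A ({t a} : Set V) ⊆ Attr A ({t b} : Set V) := by
    intro a b hab
    rcases hcomp a b with h|h
    · exact h
    · have heq := Set.eq_of_subset_of_ncard_le h hab (Set.toFinite _)
      exact heq.symm.le
  refine ⟨π, ?_, ?_⟩
  · intro i h1 h2
    rw [extA, dif_pos ⟨by omega, by omega⟩, extA, dif_pos ⟨by omega, by omega⟩]
    apply hmono
    have hrev : (⟨i + 1 - 1, by omega⟩ : Fin k).rev ≤ (⟨i - 1, by omega⟩ : Fin k).rev := by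
      rw [Fin.rev_le_rev]
      show i - 1 ≤ i + 1 - 1
      omega
    have := Tuple.monotone_sort κ hrev
    simpa [hπ, Equiv.trans_apply] using this
  · rcases Nat.eq_zero_or_pos k with h|h
    · rw [extA, dif_neg (by omega)]; trivial
    · rw [extA, dif_pos ⟨h, le_rfl⟩]
      exact start_mem_attr A s _ hw (some (π ⟨k - 1, by omega⟩))

end Sorting
section LevelArg
variable {V : Type*} [Fintype V]

lemma f0_condition (A : Arena V) (s : V) (F0 : Set V) (k : ℕ) (t : Fin k → V)
    (π : Equiv.Perm (Fin k))
    (hw : EveWins A s (fun x : Option (Fin k) => x.elim F0 (fun i => ({t i} : Set V)))) :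
    ∃ i : ℕ, i ≤ k ∧ extT t π s (i + 1) ∈ Attr A (extA A t π i ∩ F0) := by
  classical
  by_contra hcon
  push_neg at hcon
  obtain ⟨σ, hσv, hσw⟩ := hw
  set B : ℕ → Set V := fun j => Attr A (extA A t π j ∩ F0) with hB
  have hlex : ∀ L : List V, ∃ j, j = k ∨ extT t π s (j+1) ∈ L := fun L => ⟨k, Or.inl rfl⟩
  set lev : List V → ℕ := fun L => Nat.find (hlex L) with hlevdef
  have hlev_le : ∀ L, lev L ≤ k := fun L => Nat.find_min' (hlex L) (Or.inl rfl)
  have hlev_spec : ∀ L, lev L = k ∨ extT t π s (lev L + 1) ∈ L := fun L => Nat.find_spec (hlex L)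
  have hlev_min : ∀ L j, j < lev L → j ≠ k ∧ extT t π s (j+1) ∉ L := by
    intro L j hj
    have := Nat.find_min (hlex L) hj
    push_neg at this
    exact this
  have hlev_mono : ∀ (L : List V) (x : V), lev (L ++ [x]) ≤ lev L := by
    intro L x
    apply Nat.find_min' (hlex (L ++ [x]))
    rcases hlev_spec L with h|h
    · exact Or.inl h
    · exact Or.inr (List.mem_append_left _ h)
  set f : Strategy V := fun h v =>
    if hF : ∃ n, ∃ hn : n < (h ++ [v]).length, (h ++ [v]).get ⟨n, hn⟩ ∈ F0 then
      (if H : ∃ w, A.E v w ∧ w ∉ extA A t π (lev ((h ++ [v]).take (Nat.find hF + 1))) then H.choose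
       else (A.succ_nonempty v).choose)
    else
      (if H : ∃ w, A.E v w ∧ w ∉ B (lev (h ++ [v])) then H.choose
       else (A.succ_nonempty v).choose) with hf
  have hfv : ValidStrategy A f := by
    intro h v
    simp only [hf]
    split
    · split
      · next H => exact H.choose_spec.1
      · exact (A.succ_nonempty v).choose_spec
    · split
      · next H => exact H.choose_spec.1
      · exact (A.succ_nonempty v).choose_spec
  set p := advPlay A σ f s with hp
  have hplay := advPlay_isPlay A σ f s hσv hfv
  have hcons := advPlay_consistent A σ f s
  have hp0 : p 0 = s := rfl
  set Lev : ℕ → ℕ := fun m => lev (hist p (m+1)) with hLev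
  have hLev_le : ∀ m, Lev m ≤ k := fun m => hlev_le _
  have hLev_mono : ∀ m, Lev (m+1) ≤ Lev m := by
    intro m
    show lev (hist p (m+1+1)) ≤ lev (hist p (m+1))
    rw [hist_succ p (m+1)]
    exact hlev_mono _ _
  -- Claim 1 : before F0 is visited the play avoids B (Lev m)
  have claim1 : ∀ m, (∀ l, l < m → p l ∉ F0) → p m ∉ B (Lev m) := by
    intro m
    induction m with
    | zero =>
      intro _
      have h1 : hist p 1 = [p 0] := by rw [hist_succ, hist_zero, List.nil_append]
      have heq : extT t π s (Lev 0 + 1) = p 0 := by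
        have hs0 := hlev_spec (hist p (0+1))
        have hLid : lev (hist p (0+1)) = Lev 0 := rfl
        rw [hLid] at hs0
        rcases hs0 with h|h
        · rw [h, extT_top t π s, hp0]
        · rw [show hist p (0+1) = [p 0] from h1] at h
          simpa using h
      rw [← heq]
      exact hcon (Lev 0) (hLev_le 0)
    | succ m ih =>
      intro hfree
      rcases Nat.lt_or_ge (Lev (m+1)) (Lev m) with hlt | hge
      · -- level dropped : the new vertex is the corresponding target
        have hspec := hlev_spec (hist p (m+1+1))
        have hLid : lev (hist p (m+1+1)) = Lev (m+1) := rfl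
        rw [hLid] at hspec
        have hne : Lev (m+1) ≠ k := by
          have := hLev_le m; omega
        rcases hspec with h|h
        · exact absurd h hne
        · have hnotin : extT t π s (Lev (m+1) + 1) ∉ hist p (m+1) :=
            (hlev_min (hist p (m+1)) (Lev (m+1)) hlt).2
          rcases mem_hist.1 h with ⟨l, hl, hpl⟩
          rcases Nat.lt_or_ge l (m+1) with h'|h'
          · exact absurd (mem_hist.2 ⟨l, h', hpl⟩) hnotin
          · have hlm : l = m+1 := by omega
            have heq2 : extT t π s (Lev (m+1) + 1) = p (m+1) := by rw [← hpl, hlm]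
            rw [← heq2]
            exact hcon (Lev (m+1)) (hLev_le (m+1))
      · have heq : Lev (m+1) = Lev m := le_antisymm (hLev_mono m) hge
        have hm := ih (fun l hl => hfree l (by omega))
        rw [heq]
        by_cases hve : p m ∈ A.VEve
        · exact eve_trap A _ hm hve (hplay.2 m)
        · rw [hp, advPlay_adam A σ f s m hve]
          simp only [hf]
          have hnF : ¬ ∃ n, ∃ hn : n < (hist p m ++ [p m]).length,
              (hist p m ++ [p m]).get ⟨n, hn⟩ ∈ F0 := by
            rintro ⟨n, hn, hmem⟩
            have hn' : n < m + 1 := by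
              have := hn; rwa [← hist_succ, hist_length] at this
            rw [List.get_of_eq (hist_succ p m).symm, hist_get] at hmem
            exact hfree n hn' hmem
          rw [dif_neg hnF]
          have H : ∃ w, A.E (advPlay A σ f s m) w ∧
              w ∉ B (lev (hist p m ++ [p m])) := by
            have hm' : advPlay A σ f s m ∉ B (lev (hist p m ++ [p m])) := by
              rw [← hist_succ p m]
              exact hm
            exact adam_escape A _ hm' hve
          rw [dif_pos H]
          have hle2 : lev (hist p m ++ [p m]) = Lev m := by rw [← hist_succ p m]
          rw [← hle2]
          exact H.choose_spec.2
  -- the play must visit F0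
  have hvis : ∃ n, p n ∈ F0 := hσw p hplay hcons none
  set m₀ := Nat.find hvis with hm₀def
  have hm₀F : p m₀ ∈ F0 := Nat.find_spec hvis
  have hm₀min : ∀ l, l < m₀ → p l ∉ F0 := fun l hl => Nat.find_min hvis hl
  have hkey : p m₀ ∉ B (Lev m₀) := claim1 m₀ hm₀min
  have hnotA : p m₀ ∉ extA A t π (Lev m₀) := by
    intro h
    exact hkey (subset_attr A _ ⟨h, hm₀F⟩)
  have hLpos : 1 ≤ Lev m₀ := by
    rcases Nat.eq_zero_or_pos (Lev m₀) with h|h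
    · exfalso; apply hnotA; rw [h, extA_zero]; trivial
    · exact h
  set ℓ := Lev m₀ with hℓ
  have hℓk : ℓ ≤ k := hLev_le m₀
  have hextAeq : extA A t π ℓ = Attr A ({extT t π s ℓ} : Set V) := extA_eq A t π s hLpos hℓk
  -- Claim 2 : after time m₀ the play stays outside extA ℓ
  have claim2 : ∀ j, p (m₀ + j) ∉ extA A t π ℓ := by
    intro j
    induction j with
    | zero => exact hnotA
    | succ j ih =>
      set m := m₀ + j with hm
      have hstep : p (m + 1) ∉ extA A t π ℓ := by
        by_cases hve : p m ∈ A.VEve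
        · rw [hextAeq] at ih ⊢
          exact eve_trap A _ ih hve (hplay.2 m)
        · rw [hp, advPlay_adam A σ f s m hve]
          simp only [hf]
          have hlen0 : m₀ < (hist p m ++ [p m]).length := by
            rw [← hist_succ, hist_length]; omega
          have HF : ∃ n, ∃ hn : n < (hist p m ++ [p m]).length,
              (hist p m ++ [p m]).get ⟨n, hn⟩ ∈ F0 := by
            refine ⟨m₀, hlen0, ?_⟩
            rw [List.get_of_eq (hist_succ p m).symm, hist_get]
            exact hm₀F
          rw [dif_pos HF]
          have hfind : Nat.find HF = m₀ := by
            apply le_antisymm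
            · exact Nat.find_min' HF ⟨hlen0, by
                rw [List.get_of_eq (hist_succ p m).symm, hist_get]; exact hm₀F⟩
            · obtain ⟨hn1, hmem1⟩ := Nat.find_spec HF
              rw [List.get_of_eq (hist_succ p m).symm, hist_get] at hmem1
              exact Nat.find_min' hvis hmem1
          rw [hfind]
          have htake : (hist p m ++ [p m]).take (m₀ + 1) = hist p (m₀ + 1) := by
            rw [← hist_succ p m]
            exact hist_take p (by omega)
          rw [htake]
          have H : ∃ w, A.E (advPlay A σ f s m) w ∧
              w ∉ extA A t π (lev (hist p (m₀ + 1))) := by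
            have ih' : advPlay A σ f s m ∉ Attr A ({extT t π s ℓ} : Set V) := by
              rw [← hextAeq]; exact ih
            have := adam_escape A _ ih' hve
            rcases this with ⟨w, hw1, hw2⟩
            exact ⟨w, hw1, by rw [show lev (hist p (m₀+1)) = ℓ from rfl, hextAeq]; exact hw2⟩
          rw [dif_pos H]
          exact H.choose_spec.2
      exact hstep
  -- but the target t_{π(ℓ-1)} must be visited
  have hvisT : ∃ n, p n = extT t π s ℓ := by
    obtain ⟨n, hn⟩ := hσw p hplay hcons (some (π ⟨ℓ - 1, by omega⟩))
    refine ⟨n, ?_⟩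
    have : p n = t (π ⟨ℓ - 1, by omega⟩) := hn
    rw [this, extT, dif_pos ⟨hLpos, hℓk⟩]
  obtain ⟨n, hn⟩ := hvisT
  rcases Nat.lt_or_ge n m₀ with hord | hord
  · -- visited before m₀ : contradicts minimality of the level at m₀
    have hmem : extT t π s ℓ ∈ hist p (m₀ + 1) := by
      rw [mem_hist]
      exact ⟨n, by omega, hn⟩
    have := hlev_min (hist p (m₀ + 1)) (ℓ - 1) (by
      show ℓ - 1 < Lev m₀
      omega)
    rw [show ℓ - 1 + 1 = ℓ by omega] at this
    exact this.2 hmem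
  · have := claim2 (n - m₀)
    rw [show m₀ + (n - m₀) = n by omega] at this
    apply this
    rw [hn, hextAeq]
    exact subset_attr A _ rfl

end LevelArg

/-- targets are a set `F0` together with singletons
`{t 1}, ..., {t k}`. Eve wins iff for some permutation `π` the attractors
`A_{π(1)} ⊇ ... ⊇ A_{π(k)}` form a decreasing chain, `s ∈ A_{π(k)}`, and
some `t_{π(i+1)}` lies in `Attr(A_{π(i)} ∩ F0)` (with `A_{π(0)} = V`,
`t_{π(k+1)} = s`). -/
theorem genReach_one_big_target_iff (A : Arena V) (s : V) (F0 : Set V)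
    (k : ℕ) (t : Fin k → V) :
    EveWins A s (fun x : Option (Fin k) =>
        x.elim F0 (fun i => ({t i} : Set V))) ↔
      ∃ π : Equiv.Perm (Fin k),
        (∀ i : ℕ, 1 ≤ i → i + 1 ≤ k → extA A t π (i + 1) ⊆ extA A t π i) ∧
        s ∈ extA A t π k ∧
        ∃ i : ℕ, i ≤ k ∧ extT t π s (i + 1) ∈ Attr A (extA A t π i ∩ F0) := by
  constructor
  · intro hw
    obtain ⟨π, hchain, hs⟩ := exists_perm_chain A s F0 k t hw
    exact ⟨π, hchain, hs, f0_condition A s F0 k t π hw⟩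
  · rintro ⟨π, hchain, hs, i, hik, h3⟩
    exact genReach_mpr A s F0 k t π hchain hs i hik h3
end

section
/- Let H = (V_H, E_H) be a finite directed graph with designated vertices s, t ∈ V_H, and let n = |V_H|. Construct the directed graph with vertex set (V_H × {1, ..., n+1}) ∪ {⊤, ⊥} and edges: (u, i) → (v, i+1) whenever (u, v) ∈ E_H and 1 ≤ i ≤ n; (t, i) → ⊤ for every i; (v, i) → ⊥ for every v ∈ V_H with v ≠ t and every i; and self-loops on ⊤ and on ⊥. Then t is reachable from s in H if and only if there exists an infinite path from (s, 1) in the constructed graph that never visits ⊥. -/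
open List in
lemma chain_concat_aux {α : Type*} {r : α → α → Prop} {c : α} :
    ∀ {a : α} {l : List α}, Chain r a l →
      r ((a :: l).getLast (cons_ne_nil _ _)) c → Chain r a (l ++ [c])
  | a, [], _, h => Chain.cons h Chain.nil
  | a, x :: xs, hch, h => by
    change IsChain r (a :: x :: xs) at hch
    rw [chain_cons] at hch
    exact Chain.cons hch.1 (chain_concat_aux hch.2 (by rwa [getLast_cons_cons] at h))

open List in
lemma exists_nodup_chain {α : Type*} {r : α → α → Prop} {a b : α}
    (h : Relation.ReflTransGen r a b) :
    ∃ l, Chain r a l ∧ getLast (a :: l) (cons_ne_nil _ _) = b ∧ (a :: l).Nodup := by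
  induction h with
  | refl => exact ⟨[], Chain.nil, rfl, nodup_singleton a⟩
  | @tail b c hab hbc ih =>
    obtain ⟨l, hchain, hlast, hnodup⟩ := ih
    by_cases hc : c ∈ a :: l
    · obtain ⟨l₁, l₂, he⟩ := List.append_of_mem hc
      cases l₁ with
      | nil =>
        simp only [nil_append, cons.injEq] at he
        exact ⟨[], Chain.nil, he.1.symm ▸ rfl, nodup_singleton a⟩
      | cons x l₁' =>
        simp only [cons_append, cons.injEq] at he
        obtain ⟨rfl, rfl⟩ := he
        replace hchain := isChain_cons_split.mp hchain
        refine ⟨l₁' ++ [c], hchain.1, by simp, ?_⟩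
        refine hnodup.sublist ?_
        refine List.Sublist.cons₂ _ (List.Sublist.append_left ?_ _)
        exact List.cons_sublist_cons.mpr (List.nil_sublist _)
    · refine ⟨l ++ [c], chain_concat_aux hchain (hlast ▸ hbc), by simp, ?_⟩
      rw [← cons_append, nodup_append]
      exact ⟨hnodup, nodup_singleton c,
        fun x hx y hyc hxy => by subst hxy; exact hc ((List.mem_singleton.mp hyc) ▸ hx)⟩


/-- The graph constructed from `(VH, EH)` and target `t`: vertices are pairs
`(u, a)` with `a : Fin (n+1)` representing the layer `a + 1 ∈ {1, ..., n+1}`,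
together with `⊤` (`Sum.inr true`) and `⊥` (`Sum.inr false`). -/
def layerGraph {VH : Type*} (EH : VH → VH → Prop) (t : VH) (n : ℕ) :
    (VH × Fin (n + 1)) ⊕ Bool → (VH × Fin (n + 1)) ⊕ Bool → Prop
  | .inl (u, a), .inl (v, b) => EH u v ∧ (b : ℕ) = (a : ℕ) + 1
  | .inl (u, _), .inr c => (c = true ∧ u = t) ∨ (c = false ∧ u ≠ t)
  | .inr c, .inr c' => c = c'
  | .inr _, .inl _ => False

/-- `t` is reachable from `s` in `H` iff in the constructed graph
there is an infinite path from `(s, 1)` that never visits `⊥`. -/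
theorem reachable_iff_path_avoids_bot {VH : Type*} [Fintype VH]
    (EH : VH → VH → Prop) (s t : VH) :
    Relation.ReflTransGen EH s t ↔
      ∃ p : ℕ → (VH × Fin (Fintype.card VH + 1)) ⊕ Bool,
        p 0 = Sum.inl (s, 0) ∧
        (∀ i, layerGraph EH t (Fintype.card VH) (p i) (p (i + 1))) ∧
        ∀ i, p i ≠ Sum.inr false := by
  set n := Fintype.card VH with hn
  constructor
  · intro h
    obtain ⟨l, hchain, hlast, hnodup⟩ := exists_nodup_chain h
    have hchain' : (s :: l).Chain' EH := hchain
    set L := s :: l with hL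
    have hlen : L.length ≤ n := hnodup.length_le_card
    set k := l.length with hk
    have hkn : k < n := by
      have : L.length = k + 1 := by simp [hL, hk]
      omega
    refine ⟨fun i => if hi : i ≤ k then
        .inl (L.get ⟨i, by simp only [hL, List.length_cons]; omega⟩, ⟨i, by omega⟩)
      else .inr true, ?_, ?_, ?_⟩
    · simp [hL]
    · intro i
      dsimp only
      rcases lt_trichotomy i k with hik | hik | hik
      · rw [dif_pos (le_of_lt hik), dif_pos (show i + 1 ≤ k from hik)]
        refine ⟨?_, rfl⟩
        have := List.isChain_iff_getElem.mp hchain' i (by simp only [hL, List.length_cons]; omega)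
        exact this
      · subst hik
        rw [dif_pos le_rfl, dif_neg (by omega)]
        refine Or.inl ⟨rfl, ?_⟩
        have hgl : L.get ⟨k, by simp [hL, hk]⟩ = L.getLast (by simp [hL]) := by
          rw [List.getLast_eq_getElem]
          congr 1 <;> simp [hL]
        rw [hgl]
        exact hlast
      · rw [dif_neg (by omega), dif_neg (by omega)]
        rfl
    · intro i
      dsimp only
      split <;> simp
  · rintro ⟨p, h0, hstep, hbot⟩
    have key : ∀ i, (∀ j ≤ i, ∃ x, p j = Sum.inl x) →
        ∃ u : VH, ∃ a : Fin (n + 1),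
          p i = .inl (u, a) ∧ (a : ℕ) = i ∧ Relation.ReflTransGen EH s u := by
      intro i
      induction i with
      | zero => intro _; exact ⟨s, 0, h0, rfl, .refl⟩
      | succ i ih =>
        intro hall
        obtain ⟨u, a, hpi, hai, hsu⟩ := ih fun j hj => hall j (by omega)
        obtain ⟨⟨v, b⟩, hpc⟩ := hall (i + 1) le_rfl
        have := hstep i
        rw [hpi, hpc] at this
        obtain ⟨huv, hb⟩ := this
        exact ⟨v, b, hpc, by omega, hsu.tail huv⟩
    have hnotall : ¬ ∀ j ≤ n + 1, ∃ x, p j = Sum.inl x := by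
      intro hall
      obtain ⟨u, a, _, hai, _⟩ := key (n + 1) hall
      have := a.isLt
      omega
    push_neg at hnotall
    obtain ⟨j, hj, hjnot⟩ := hnotall
    classical
    have hex : ∃ j, ¬ ∃ x, p j = Sum.inl x := ⟨j, fun ⟨x, hx⟩ => hjnot x hx⟩
    have hmspec := Nat.find_spec hex
    set m := Nat.find hex with hmdef
    have hm0 : 0 < m := by
      rcases Nat.eq_zero_or_pos m with hz | h
      · rw [hz] at hmspec; exact absurd ⟨_, h0⟩ hmspec
      · exact h
    obtain ⟨u, a, hpm1, _, hsu⟩ := key (m - 1) fun j' hj' => by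
      by_contra hcon
      exact Nat.find_min hex (m := j') (by omega) hcon
    have hstepm := hstep (m - 1)
    rw [Nat.sub_add_cancel hm0, hpm1] at hstepm
    obtain ⟨x, hx⟩ | ⟨c, hc⟩ : (∃ x, p m = Sum.inl x) ∨ ∃ c, p m = Sum.inr c := by
      cases hpm : p m with
      | inl x => exact Or.inl ⟨x, rfl⟩
      | inr c => exact Or.inr ⟨c, rfl⟩
    · exact absurd ⟨x, hx⟩ hmspec
    · rw [hc] at hstepm
      rcases hstepm with ⟨hct, hut⟩ | ⟨hcf, _⟩
      · exact hut ▸ hsu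
      · exact absurd (hcf ▸ hc) (hbot m)
end

section
/- Let G = (V, E) be a finite directed graph in which every vertex has at least one outgoing edge, let s ∈ V, and let T ⊆ V be a set of target vertices. Then the maximum, over all infinite paths π from s, of the number of vertices of T visited by π equals the maximum, over all directed paths C_0 C_1 ... C_r in the condensation of G such that s ∈ C_0, of the sum Σ_{j=0}^{r} |T ∩ C_j|. -/
/-- A strongly connected component of the directed graph `E`: a maximal
(nonempty) set of vertices each reachable from every other. -/
def IsSCC {V : Type*} (E : V → V → Prop) (C : Set V) : Prop :=
  C.Nonempty ∧ (∀ u ∈ C, ∀ v ∈ C, Relation.ReflTransGen E u v) ∧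
    ∀ D : Set V, C ⊆ D → (∀ u ∈ D, ∀ v ∈ D, Relation.ReflTransGen E u v) → D = C

/-- An edge of the condensation of `E`, between two (distinct) SCCs. -/
def CondEdge {V : Type*} (E : V → V → Prop) (C C' : Set V) : Prop :=
  C ≠ C' ∧ ∃ u ∈ C, ∃ v ∈ C', E u v

namespace SCCAux

variable {V : Type*} (E : V → V → Prop)

def scc (v : V) : Set V :=
  {u | Relation.ReflTransGen E u v ∧ Relation.ReflTransGen E v u}

lemma mem_scc_self (v : V) : v ∈ scc E v := ⟨.refl, .refl⟩

lemma scc_pairwise {v : V} : ∀ u ∈ scc E v, ∀ w ∈ scc E v, Relation.ReflTransGen E u w :=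
  fun _ hu _ hw => hu.1.trans hw.2

lemma isSCC_scc (v : V) : IsSCC E (scc E v) := by
  refine ⟨⟨v, mem_scc_self E v⟩, scc_pairwise E, fun D hsub hD => ?_⟩
  apply Set.Subset.antisymm _ hsub
  intro u hu
  exact ⟨hD u hu v (hsub (mem_scc_self E v)), hD v (hsub (mem_scc_self E v)) u hu⟩

lemma eq_scc {C : Set V} (h : IsSCC E C) {v : V} (hv : v ∈ C) : C = scc E v := by
  refine (h.2.2 (scc E v) ?_ (scc_pairwise E)).symm
  intro u hu
  exact ⟨h.2.1 u hu v hv, h.2.1 v hv u hu⟩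

lemma scc_eq_of_mem {C C' : Set V} (hC : IsSCC E C) (hC' : IsSCC E C') {v : V}
    (h : v ∈ C) (h' : v ∈ C') : C = C' :=
  (eq_scc E hC h).trans (eq_scc E hC' h').symm

lemma mem_of_between {C : Set V} (h : IsSCC E C) {u v w : V} (hu : u ∈ C) (hv : v ∈ C)
    (h1 : Relation.ReflTransGen E u w) (h2 : Relation.ReflTransGen E w v) : w ∈ C := by
  rw [eq_scc E h hv]
  exact ⟨h2, (h.2.1 v hv u hu).trans h1⟩

lemma path_reach {p : ℕ → V} (hp : ∀ i, E (p i) (p (i + 1))) :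
    ∀ {i j : ℕ}, i ≤ j → Relation.ReflTransGen E (p i) (p j) := by
  intro i j hij
  induction j with
  | zero => rw [Nat.le_zero.mp hij]
  | succ j ih =>
    rcases Nat.lt_or_ge i (j+1) with h | h
    · exact (ih (Nat.lt_succ_iff.mp h)).tail (hp j)
    · rw [Nat.le_antisymm hij h]


lemma chain_concat {u v : V} {l₁ l₂ : List V}
    (h1 : List.Chain E u l₁) (hlast : (u :: l₁).getLast (by simp) = v)
    (h2 : List.Chain E v l₂) :
    List.Chain E u (l₁ ++ l₂) ∧
      ((u :: (l₁ ++ l₂)).getLast (by simp) = (v :: l₂).getLast (by simp)) := by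
  induction l₁ generalizing u with
  | nil =>
    simp only [List.getLast_singleton] at hlast
    subst hlast
    simpa using h2
  | cons a l ih =>
    rcases h1 with _ | _ | ⟨hua, hal⟩
    have hlast' : (a :: l).getLast (by simp) = v := by
      rw [← hlast]; exact (List.getLast_cons_cons (a := u) (b := a) (l := l)).symm ▸ rfl
    obtain ⟨hc, he⟩ := ih hal hlast'
    refine ⟨List.Chain.cons hua hc, ?_⟩
    rw [← he]
    simp [List.getLast_cons_cons]

lemma exists_chain_of_rtg {u v : V} (h : Relation.ReflTransGen E u v) :
    ∃ l : List V, List.Chain E u l ∧ (u :: l).getLast (by simp) = v := by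
  induction h with
  | refl => exact ⟨[], List.Chain.nil, rfl⟩
  | tail hab hbc ih =>
    obtain ⟨l, hc, hlast⟩ := ih
    obtain ⟨hc', hlast'⟩ := chain_concat E hc hlast (List.chain_cons.mpr ⟨hbc, List.Chain.nil⟩)
    refine ⟨l ++ [_], hc', ?_⟩
    rw [hlast']
    simp

lemma exists_tour (a : V) (S : Finset V)
    (hS : ∀ x ∈ S, Relation.ReflTransGen E a x ∧ Relation.ReflTransGen E x a) :
    ∃ l : List V, List.Chain E a l ∧ (a :: l).getLast (by simp) = a ∧
      ∀ x ∈ S, x ∈ a :: l := by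
  classical
  induction S using Finset.induction with
  | empty => exact ⟨[], List.Chain.nil, rfl, by simp⟩
  | @insert x S' hx ih =>
    obtain ⟨l, hc, hlast, hmem⟩ := ih (fun y hy => hS y (Finset.mem_insert_of_mem hy))
    obtain ⟨h1, h2⟩ := hS x (Finset.mem_insert_self x S')
    obtain ⟨l1, hc1, hl1⟩ := exists_chain_of_rtg E h1
    obtain ⟨l2, hc2, hl2⟩ := exists_chain_of_rtg E h2
    obtain ⟨hcb, hlb⟩ := chain_concat E hc1 hl1 hc2
    rw [hl2] at hlb
    obtain ⟨hcc, hlc⟩ := chain_concat E hcb hlb hc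
    rw [hlast] at hlc
    refine ⟨(l1 ++ l2) ++ l, hcc, hlc, ?_⟩
    intro y hy
    rcases Finset.mem_insert.mp hy with rfl | hy'
    · have hm : y ∈ a :: l1 := by
        rw [← hl1]; exact List.getLast_mem _
      simp only [List.mem_cons, List.mem_append] at hm ⊢
      tauto
    · have hm := hmem y hy'
      simp only [List.mem_cons, List.mem_append] at hm ⊢
      tauto




noncomputable def pathOf (a : V) (l : List V) (f : V → V) : ℕ → V
  | 0 => a
  | (i+1) => if h : i + 1 < (a :: l).length then (a :: l).get ⟨i+1, h⟩ else f (pathOf a l f i)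

lemma pathOf_get (a : V) (l : List V) (f : V → V) : ∀ (i : ℕ) (h : i < (a :: l).length),
    pathOf a l f i = (a :: l).get ⟨i, h⟩ := by
  intro i h
  cases i with
  | zero => simp [pathOf]
  | succ i =>
    have h' : i < l.length := by simpa using h
    simp [pathOf, h']

lemma pathOf_edges {f : V → V} (hf : ∀ v, E v (f v)) {a : V} {l : List V}
    (hL : List.Chain E a l) (i : ℕ) :
    E (pathOf a l f i) (pathOf a l f (i + 1)) := by
  by_cases h : i + 1 < (a :: l).length
  · have hi : i < (a :: l).length := Nat.lt_of_succ_lt h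
    rw [pathOf_get a l f i hi, pathOf_get a l f (i+1) h]
    exact List.isChain_iff_getElem.mp (show List.Chain' E (a :: l) from hL) i (by simpa using h)
  · show E _ (pathOf a l f (i+1))
    have h' : ¬ i < l.length := by simpa using h
    rw [show pathOf a l f (i+1) = f (pathOf a l f i) by simp [pathOf, h']]
    exact hf _

lemma pathOf_mem {a : V} {l : List V} {f : V → V} {x : V} (hx : x ∈ a :: l) :
    ∃ i, pathOf a l f i = x := by
  obtain ⟨⟨i, hi⟩, hget⟩ := List.mem_iff_get.mp hx
  exact ⟨i, (pathOf_get a l f i hi).trans hget⟩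


lemma cond_reach {r : ℕ} {C : ℕ → Set V} (hC : ∀ j ≤ r, IsSCC E (C j))
    (hCE : ∀ j < r, CondEdge E (C j) (C (j + 1))) :
    ∀ j k, j ≤ k → k ≤ r → ∀ u ∈ C j, ∀ v ∈ C k, Relation.ReflTransGen E u v := by
  intro j k hjk
  induction k, hjk using Nat.le_induction with
  | base => intro hr u hu v hv; exact (hC j hr).2.1 u hu v hv
  | succ k hjk ih =>
    intro hkr u hu v hv
    have hk : k < r := hkr
    obtain ⟨_, u', hu', v', hv', he⟩ := hCE k hk
    exact (((ih hk.le) u hu u' hu').tail he).trans ((hC (k+1) hkr).2.1 v' hv' v hv)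

lemma cond_distinct {r : ℕ} {C : ℕ → Set V} (hC : ∀ j ≤ r, IsSCC E (C j))
    (hCE : ∀ j < r, CondEdge E (C j) (C (j + 1))) :
    ∀ j k, j < k → k ≤ r → C j ≠ C k := by
  intro j k hjk hkr heq
  have hjr : j < r := lt_of_lt_of_le hjk hkr
  obtain ⟨hne, u, hu, v, hv, he⟩ := hCE j hjr
  have h1 : Relation.ReflTransGen E v u :=
    cond_reach E hC hCE (j+1) k hjk hkr v hv u (heq ▸ hu)
  have hvj : v ∈ C j :=
    mem_of_between E (hC j hjr.le) hu hu (Relation.ReflTransGen.single he) h1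
  exact hne (scc_eq_of_mem E (hC j hjr.le) (hC (j+1) hjr) hvj hv)

lemma exists_walk_through [Fintype V] (s : V) (C : ℕ → Set V) :
    ∀ r : ℕ, (∀ j ≤ r, IsSCC E (C j)) → s ∈ C 0 → (∀ j < r, CondEdge E (C j) (C (j + 1))) →
    ∃ l : List V, List.Chain E s l ∧ (s :: l).getLast (by simp) ∈ C r ∧
      ∀ j ≤ r, ∀ x ∈ C j, x ∈ s :: l := by
  intro r
  induction r with
  | zero =>
    intro hC hs _
    have h0 := hC 0 le_rfl
    obtain ⟨l, hc, hlast, hmem⟩ := exists_tour E s (Set.toFinite (C 0)).toFinset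
      (fun x hx => by
        rw [Set.Finite.mem_toFinset] at hx
        exact ⟨h0.2.1 s hs x hx, h0.2.1 x hx s hs⟩)
    refine ⟨l, hc, by rw [hlast]; exact hs, ?_⟩
    intro j hj x hx
    interval_cases j
    exact hmem x ((Set.Finite.mem_toFinset _).mpr hx)
  | succ r ih =>
    intro hC hs hCE
    obtain ⟨l, hc, hend, hmem⟩ := ih (fun j hj => hC j (hj.trans (Nat.le_succ r))) hs
      (fun j hj => hCE j (hj.trans (Nat.lt_succ_self r)))
    obtain ⟨hne, u, hu, v, hv, huv⟩ := hCE r (Nat.lt_succ_self r)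
    have hbu : Relation.ReflTransGen E ((s :: l).getLast (by simp)) u :=
      (hC r (Nat.le_succ r)).2.1 _ hend u hu
    obtain ⟨l1, hc1, hl1⟩ := exists_chain_of_rtg E hbu
    obtain ⟨ca, la⟩ := chain_concat E hc1 hl1 (List.chain_cons.mpr ⟨huv, List.Chain.nil⟩)
    have la' : (((s :: l).getLast (by simp)) :: (l1 ++ [v])).getLast (by simp) = v := by
      rw [la]; simp
    obtain ⟨l2, hc2, hl2, hmem2⟩ := exists_tour E v (Set.toFinite (C (r+1))).toFinset
      (fun x hx => by
        rw [Set.Finite.mem_toFinset] at hx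
        exact ⟨(hC (r+1) le_rfl).2.1 v hv x hx, (hC (r+1) le_rfl).2.1 x hx v hv⟩)
    obtain ⟨cb, lb⟩ := chain_concat E ca la' hc2
    obtain ⟨cc, lc⟩ := chain_concat E hc rfl cb
    refine ⟨l ++ ((l1 ++ [v]) ++ l2), cc, ?_, ?_⟩
    · rw [lc, lb, hl2]; exact hv
    · intro j hj x hx
      simp only [List.mem_cons, List.mem_append] at *
      rcases Nat.lt_succ_iff_lt_or_eq.mp (Nat.lt_succ_of_le hj) with h | rfl
      · have := hmem j (Nat.lt_succ_iff.mp h) x hx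
        tauto
      · have := hmem2 x ((Set.Finite.mem_toFinset _).mpr hx)
        tauto


open Classical in
noncomputable def chT (Q : ℕ → Set V) : ℕ → ℕ
  | 0 => 0
  | (j+1) => if h : {i | chT Q j < i ∧ Q i ≠ Q (chT Q j)}.Nonempty
             then sInf {i | chT Q j < i ∧ Q i ≠ Q (chT Q j)} else chT Q j

lemma chT_succ_of_nonempty {Q : ℕ → Set V} {j : ℕ}
    (h : {i | chT Q j < i ∧ Q i ≠ Q (chT Q j)}.Nonempty) :
    chT Q (j+1) = sInf {i | chT Q j < i ∧ Q i ≠ Q (chT Q j)} := by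
  rw [chT]; exact dif_pos h

lemma chT_succ_of_empty {Q : ℕ → Set V} {j : ℕ}
    (h : ¬ {i | chT Q j < i ∧ Q i ≠ Q (chT Q j)}.Nonempty) :
    chT Q (j+1) = chT Q j := by
  rw [chT]; exact dif_neg h

lemma chT_mono {Q : ℕ → Set V} : Monotone (chT Q) := by
  apply monotone_nat_of_le_succ
  intro j
  by_cases h : {i | chT Q j < i ∧ Q i ≠ Q (chT Q j)}.Nonempty
  · rw [chT_succ_of_nonempty h]
    exact (Nat.sInf_mem h).1.le
  · rw [chT_succ_of_empty h]

lemma chT_stab {Q : ℕ → Set V} {j : ℕ} (hj : chT Q (j+1) = chT Q j) :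
    ∀ i, chT Q j < i → Q i = Q (chT Q j) := by
  intro i hi
  by_contra hne
  have hne' : {i | chT Q j < i ∧ Q i ≠ Q (chT Q j)}.Nonempty := ⟨i, hi, hne⟩
  rw [chT_succ_of_nonempty hne'] at hj
  exact (Nat.sInf_mem hne').1.ne' hj

lemma chT_step {Q : ℕ → Set V} {j : ℕ} (hj : chT Q (j+1) ≠ chT Q j) :
    chT Q j < chT Q (j+1) ∧ Q (chT Q (j+1)) ≠ Q (chT Q j) ∧
      (∀ i, chT Q j < i → i < chT Q (j+1) → Q i = Q (chT Q j)) ∧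
      (∀ i, chT Q j < i → Q i ≠ Q (chT Q j) → chT Q (j+1) ≤ i) := by
  by_cases h : {i | chT Q j < i ∧ Q i ≠ Q (chT Q j)}.Nonempty
  · rw [chT_succ_of_nonempty h]
    refine ⟨(Nat.sInf_mem h).1, (Nat.sInf_mem h).2, ?_, ?_⟩
    · intro i hi1 hi2
      by_contra hne
      exact absurd (Nat.sInf_le (show i ∈ {i | chT Q j < i ∧ Q i ≠ Q (chT Q j)} from ⟨hi1, hne⟩))
        (Nat.not_le.mpr hi2)
    · intro i hi1 hi2
      exact Nat.sInf_le (show i ∈ {i | chT Q j < i ∧ Q i ≠ Q (chT Q j)} from ⟨hi1, hi2⟩)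
  · exact absurd (chT_succ_of_empty h) hj


lemma exists_cond_ge [Fintype V] (s : V) (T : Set V) {p : ℕ → V}
    (hp0 : p 0 = s) (hp : ∀ i, E (p i) (p (i + 1))) :
    ∃ (r : ℕ) (C : ℕ → Set V),
      (∀ j ≤ r, IsSCC E (C j)) ∧ s ∈ C 0 ∧
      (∀ j < r, CondEdge E (C j) (C (j + 1))) ∧
      (T ∩ {v | ∃ i, p i = v}).ncard ≤ ∑ j ∈ Finset.range (r + 1), (T ∩ C j).ncard := by
  classical
  set Q : ℕ → Set V := fun i => scc E (p i) with hQdef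
  have hQmem : ∀ i, p i ∈ Q i := fun i => mem_scc_self E (p i)
  have hQscc : ∀ i, IsSCC E (Q i) := fun i => isSCC_scc E (p i)
  have hQeq : ∀ i i', p i = p i' → Q i = Q i' := by
    intro i i' h
    show scc E (p i) = scc E (p i')
    rw [h]
  have hcontig : ∀ i j k, i ≤ j → j ≤ k → Q k = Q i → Q j = Q i := by
    intro i j k hij hjk hki
    have hpk : p k ∈ Q i := hki ▸ hQmem k
    have hpj : p j ∈ Q i :=
      mem_of_between E (hQscc i) (hQmem i) hpk (path_reach E hp hij) (path_reach E hp hjk)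
    exact scc_eq_of_mem E (hQscc j) (hQscc i) (hQmem j) hpj
  set t : ℕ → ℕ := chT Q with htdef
  have hQt_ne : ∀ j k, j < k → t (j+1) ≠ t j → Q (t k) ≠ Q (t j) := by
    intro j k hjk hj heq
    obtain ⟨hlt, hne, -, -⟩ := chT_step hj
    exact hne (hcontig (t j) (t (j+1)) (t k) hlt.le (chT_mono hjk) heq)
  have hr : ∃ j, t (j+1) = t j := by
    by_contra hno
    push_neg at hno
    obtain ⟨j, k, hjk, hpe⟩ := Finite.exists_ne_map_eq_of_infinite (fun j => p (t j))
    rcases hjk.lt_or_gt with h | h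
    · exact hQt_ne j k h (hno j) (hQeq (t k) (t j) hpe.symm)
    · exact hQt_ne k j h (hno k) (hQeq (t j) (t k) hpe)
  set r := Nat.find hr with hrdef
  have hrspec : t (r+1) = t r := Nat.find_spec hr
  have hrmin : ∀ j < r, t (j+1) ≠ t j := fun j hj => Nat.find_min hr hj
  have hstabr : ∀ i, t r < i → Q i = Q (t r) := chT_stab hrspec
  have ht0 : t 0 = 0 := rfl
  -- coverage
  have hcov : ∀ i, ∃ j ≤ r, t j ≤ i ∧ Q i = Q (t j) := by
    intro i
    induction i with
    | zero => exact ⟨0, Nat.zero_le r, ht0.le, rfl⟩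
    | succ i ih =>
      obtain ⟨j, hjr, hji, hQi⟩ := ih
      by_cases hQ : Q (i+1) = Q (t j)
      · exact ⟨j, hjr, hji.trans (Nat.le_succ i), hQ⟩
      · have hjltr : j < r := by
          rcases Nat.lt_or_ge j r with h | h
          · exact h
          · exfalso
            have hjr' : j = r := le_antisymm hjr h
            subst hjr'
            exact hQ ((hstabr (i+1) (Nat.lt_succ_of_le hji)))
        obtain ⟨hlt, hne, hmid, hmin⟩ := chT_step (hrmin j hjltr)
        have hle : t (j+1) ≤ i + 1 :=
          hmin (i+1) (Nat.lt_succ_of_le hji) (hQi ▸ hQ)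
        have heq2 : t (j+1) = i + 1 := by
          rcases Nat.lt_or_ge i (t (j+1)) with h | h
          · omega
          · exfalso
            exact hne (hcontig (t j) (t (j+1)) i hlt.le h hQi)
        exact ⟨j+1, hjltr, heq2.le, by rw [heq2]⟩
  refine ⟨r, fun j => Q (t j), fun j _ => hQscc (t j), ?_, ?_, ?_⟩
  · show s ∈ scc E (p (t 0))
    rw [ht0, hp0]
    exact mem_scc_self E s
  · intro j hj
    obtain ⟨hlt, hne, hmid, -⟩ := chT_step (hrmin j hj)
    rw [← htdef] at hlt hne hmid
    have hm1 : t (j+1) - 1 + 1 = t (j+1) := by omega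
    have hpk : p (t (j+1) - 1) ∈ Q (t j) := by
      rcases Nat.lt_or_ge (t j) (t (j+1) - 1) with h | h
      · exact (hmid _ h (by omega)) ▸ hQmem _
      · have : t (j+1) - 1 = t j := by omega
        rw [this]; exact hQmem _
    refine ⟨hne.symm, p (t (j+1) - 1), hpk, p (t (j+1)), hQmem _, ?_⟩
    have := hp (t (j+1) - 1)
    rwa [hm1] at this
  · have hsub : T ∩ {v | ∃ i, p i = v} ⊆ ⋃ j ∈ Finset.range (r+1), (T ∩ Q (t j)) := by
      rintro x ⟨hxT, i, rfl⟩
      obtain ⟨j, hjr, -, hQi⟩ := hcov i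
      exact Set.mem_biUnion (Finset.mem_range.mpr (Nat.lt_succ_of_le hjr))
        ⟨hxT, hQi ▸ hQmem i⟩
    calc (T ∩ {v | ∃ i, p i = v}).ncard
        ≤ (⋃ j ∈ Finset.range (r+1), (T ∩ Q (t j))).ncard :=
          Set.ncard_le_ncard hsub (Set.toFinite _)
      _ ≤ ∑ j ∈ Finset.range (r+1), (T ∩ Q (t j)).ncard := by
          rw [Set.ncard_eq_toFinset_card _ (Set.toFinite _)]
          have hbU : (Set.toFinite (⋃ j ∈ Finset.range (r+1), (T ∩ Q (t j)))).toFinset ⊆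
              (Finset.range (r+1)).biUnion
                (fun j => (Set.toFinite (T ∩ Q (t j))).toFinset) := by
            intro x hx
            rw [Set.Finite.mem_toFinset] at hx
            obtain ⟨j, hj, hxj⟩ := Set.mem_iUnion₂.mp hx
            exact Finset.mem_biUnion.mpr ⟨j, hj, (Set.Finite.mem_toFinset _).mpr hxj⟩
          calc _ ≤ ((Finset.range (r+1)).biUnion
                (fun j => (Set.toFinite (T ∩ Q (t j))).toFinset)).card :=
                Finset.card_le_card hbU
            _ ≤ ∑ j ∈ Finset.range (r+1), ((Set.toFinite (T ∩ Q (t j))).toFinset).card :=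
                Finset.card_biUnion_le
            _ = ∑ j ∈ Finset.range (r+1), (T ∩ Q (t j)).ncard := by
                refine Finset.sum_congr rfl fun j _ => ?_
                rw [Set.ncard_eq_toFinset_card _ (Set.toFinite _)]


lemma exists_path_ge [Fintype V] (hEt : ∀ v, ∃ w, E v w) (s : V) (T : Set V)
    {r : ℕ} {C : ℕ → Set V} (hC : ∀ j ≤ r, IsSCC E (C j)) (hs : s ∈ C 0)
    (hCE : ∀ j < r, CondEdge E (C j) (C (j + 1))) :
    ∃ p : ℕ → V, p 0 = s ∧ (∀ i, E (p i) (p (i + 1))) ∧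
      ∑ j ∈ Finset.range (r + 1), (T ∩ C j).ncard ≤ (T ∩ {v | ∃ i, p i = v}).ncard := by
  classical
  choose f hf using hEt
  obtain ⟨l, hc, -, hmem⟩ := exists_walk_through E s C r hC hs hCE
  refine ⟨pathOf s l f, rfl, fun i => pathOf_edges E hf hc i, ?_⟩
  have hdisj : ∀ j ∈ Finset.range (r+1), ∀ k ∈ Finset.range (r+1), j ≠ k →
      Disjoint (Set.toFinite (T ∩ C j)).toFinset (Set.toFinite (T ∩ C k)).toFinset := by
    intro j hj k hk hjk
    rw [Finset.disjoint_left]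
    intro x hxj hxk
    rw [Set.Finite.mem_toFinset] at hxj hxk
    have hne : C j ≠ C k := by
      rcases hjk.lt_or_gt with h | h
      · exact cond_distinct E hC hCE j k h (Finset.mem_range_succ_iff.mp hk)
      · exact (cond_distinct E hC hCE k j h (Finset.mem_range_succ_iff.mp hj)).symm
    exact hne (scc_eq_of_mem E (hC j (Finset.mem_range_succ_iff.mp hj))
      (hC k (Finset.mem_range_succ_iff.mp hk)) hxj.2 hxk.2)
  have hsum : ∑ j ∈ Finset.range (r+1), (T ∩ C j).ncard =
      ((Finset.range (r+1)).biUnion (fun j => (Set.toFinite (T ∩ C j)).toFinset)).card := by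
    rw [Finset.card_biUnion hdisj]
    exact Finset.sum_congr rfl fun j _ => Set.ncard_eq_toFinset_card _ (Set.toFinite _)
  rw [hsum, Set.ncard_eq_toFinset_card _ (Set.toFinite _)]
  apply Finset.card_le_card
  intro x hx
  obtain ⟨j, hj, hxj⟩ := Finset.mem_biUnion.mp hx
  rw [Set.Finite.mem_toFinset] at hxj
  rw [Set.Finite.mem_toFinset]
  refine ⟨hxj.1, ?_⟩
  exact pathOf_mem (hmem j (Finset.mem_range_succ_iff.mp hj) x hxj.2)

end SCCAux

/-- the maximum number of target vertices of `T` visited by an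
infinite path from `s` equals the maximum, over directed paths
`C 0, C 1, ..., C r` in the condensation starting at the SCC containing `s`,
of `Σ_j |T ∩ C j|`. -/
theorem max_targets_eq_max_condensation_path {V : Type*} [Fintype V]
    (E : V → V → Prop) (hE : ∀ v, ∃ w, E v w) (s : V) (T : Set V) :
    sSup {c : ℕ | ∃ p : ℕ → V, p 0 = s ∧ (∀ i, E (p i) (p (i + 1))) ∧
        c = (T ∩ {v | ∃ i, p i = v}).ncard} =
    sSup {c : ℕ | ∃ (r : ℕ) (C : ℕ → Set V),
        (∀ j ≤ r, IsSCC E (C j)) ∧ s ∈ C 0 ∧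
        (∀ j < r, CondEdge E (C j) (C (j + 1))) ∧
        c = ∑ j ∈ Finset.range (r + 1), (T ∩ C j).ncard} := by
  classical
  set A := {c : ℕ | ∃ p : ℕ → V, p 0 = s ∧ (∀ i, E (p i) (p (i + 1))) ∧
      c = (T ∩ {v | ∃ i, p i = v}).ncard} with hA
  set B := {c : ℕ | ∃ (r : ℕ) (C : ℕ → Set V),
      (∀ j ≤ r, IsSCC E (C j)) ∧ s ∈ C 0 ∧
      (∀ j < r, CondEdge E (C j) (C (j + 1))) ∧
      c = ∑ j ∈ Finset.range (r + 1), (T ∩ C j).ncard} with hB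
  have hAbdd : BddAbove A := by
    refine ⟨(Set.univ : Set V).ncard, ?_⟩
    rintro c ⟨p, -, -, rfl⟩
    exact Set.ncard_le_ncard (Set.subset_univ _) Set.finite_univ
  have hBbdd : BddAbove B := by
    refine ⟨(Set.univ : Set V).ncard, ?_⟩
    rintro c ⟨r, C, hC, hs, hCE, rfl⟩
    obtain ⟨p, -, -, hle⟩ := SCCAux.exists_path_ge E hE s T hC hs hCE
    exact hle.trans (Set.ncard_le_ncard (Set.subset_univ _) Set.finite_univ)
  have hAne : A.Nonempty := by
    choose f hf using hE
    refine ⟨(T ∩ {v | ∃ i, f^[i] s = v}).ncard, fun i => f^[i] s, rfl, fun i => ?_, rfl⟩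
    show E (f^[i] s) (f^[i+1] s)
    rw [Function.iterate_succ_apply']
    exact hf _
  have hBne : B.Nonempty := by
    refine ⟨_, 0, fun _ => SCCAux.scc E s, ?_, SCCAux.mem_scc_self E s, ?_, rfl⟩
    · intro j _; exact SCCAux.isSCC_scc E s
    · intro j hj; omega
  apply le_antisymm
  · apply csSup_le hAne
    rintro c ⟨p, hp0, hp, rfl⟩
    obtain ⟨r, C, hC, hs, hCE, hle⟩ := SCCAux.exists_cond_ge E s T hp0 hp
    exact hle.trans (le_csSup hBbdd ⟨r, C, hC, hs, hCE, rfl⟩)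
  · apply csSup_le hBne
    rintro c ⟨r, C, hC, hs, hCE, rfl⟩
    obtain ⟨p, hp0, hp, hle⟩ := SCCAux.exists_path_ge E hE s T hC hs hCE
    exact hle.trans (le_csSup hAbdd ⟨p, hp0, hp, rfl⟩)
end

section
/- Let c_1, ..., c_m be clauses (sets of literals) over Boolean variables x_1, ..., x_n. Construct the directed graph with vertex set {1, ..., n} ∪ {x_i, ¬x_i : 1 ≤ i ≤ n} ∪ {⊥} and edges i → x_i and i → ¬x_i for all i, x_i → i+1 and ¬x_i → i+1 for all i < n, x_n → ⊥ and ¬x_n → ⊥, and a self-loop on ⊥; view each clause c_j as the set of its literal vertices. Then for every infinite path from vertex 1 there is a Boolean assignment to x_1, ..., x_n that satisfies exactly those clauses c_j whose vertex sets the path visits, and conversely for every Boolean assignment there is an infinite path from vertex 1 visiting exactly the vertex sets of the satisfied clauses. Consequently, for every k there is an infinite path from 1 visiting at least (respectively, at most) k of the sets c_1, ..., c_m if and only if some assignment satisfies at least (respectively, at most) k of the clauses. -/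
/-- The one-player clause graph over variables `x_0, ..., x_{n-1}` (0-indexed):
vertices are the variable-choice vertices `i` (`Sum.inl (Sum.inl i)`),
the literal vertices (`Sum.inl (Sum.inr (i, b))`, where `b = true` stands for
the positive literal `x i` and `b = false` for `¬ x i`), and the sink `⊥`
(`Sum.inr ()`). -/
def clauseGraph (n : ℕ) :
    (Fin n ⊕ (Fin n × Bool)) ⊕ Unit → (Fin n ⊕ (Fin n × Bool)) ⊕ Unit → Prop
  | .inl (.inl i), .inl (.inr l) => l.1 = i
  | .inl (.inr l), .inl (.inl i') => (i' : ℕ) = (l.1 : ℕ) + 1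
  | .inl (.inr l), .inr _ => (l.1 : ℕ) + 1 = n
  | .inr _, .inr _ => True
  | _, _ => False

/-- The assignment `α` satisfies the clause `c` (a finite set of literals). -/
def SatClause {n : ℕ} (α : Fin n → Bool) (c : Finset (Fin n × Bool)) : Prop :=
  ∃ l ∈ c, α l.1 = l.2

/-- The path `p` in the clause graph visits (the vertex set of) the clause `c`. -/
def VisitsClause {n : ℕ} (p : ℕ → (Fin n ⊕ (Fin n × Bool)) ⊕ Unit)
    (c : Finset (Fin n × Bool)) : Prop :=
  ∃ i, ∃ l ∈ c, p i = Sum.inl (Sum.inr l)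

/-- An infinite path in the clause graph starting at the first
variable-choice vertex. -/
def IsClausePath {n : ℕ} (hn : 0 < n)
    (p : ℕ → (Fin n ⊕ (Fin n × Bool)) ⊕ Unit) : Prop :=
  p 0 = Sum.inl (Sum.inl ⟨0, hn⟩) ∧ ∀ i, clauseGraph n (p i) (p (i + 1))

def cpath {n : ℕ} (α : Fin n → Bool) (k : ℕ) : (Fin n ⊕ (Fin n × Bool)) ⊕ Unit :=
  if h : k < 2 * n then
    if h2 : k % 2 = 0 then .inl (.inl ⟨k / 2, by omega⟩)
    else .inl (.inr (⟨k / 2, by omega⟩, α ⟨k / 2, by omega⟩))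
  else .inr ()

lemma cpath_isPath {n : ℕ} (hn : 0 < n) (α : Fin n → Bool) :
    IsClausePath hn (cpath α) := by
  constructor
  · simp only [cpath]
    rw [dif_pos (by omega), dif_pos (by norm_num)]
  · intro k
    by_cases h : k < 2 * n
    · by_cases h2 : k % 2 = 0
      · have h1 : k + 1 < 2 * n := by omega
        have h3 : ¬ ((k+1) % 2 = 0) := by omega
        simp [cpath, h, h2, h1, h3, clauseGraph]
        omega
      · by_cases h1 : k + 1 < 2 * n
        · have h3 : (k+1) % 2 = 0 := by omega
          simp [cpath, h, h2, h1, h3, clauseGraph]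
          omega
        · simp [cpath, h, h2, h1, clauseGraph]
          omega
    · have h1 : ¬ (k + 1 < 2 * n) := by omega
      simp [cpath, h, h1, clauseGraph]

lemma path_eq_cpath {n : ℕ} (hn : 0 < n) (p : ℕ → (Fin n ⊕ (Fin n × Bool)) ⊕ Unit)
    (hp : IsClausePath hn p) :
    ∃ α : Fin n → Bool, ∀ k, p k = cpath α k := by
  classical
  set α : Fin n → Bool := fun i =>
    match p (2 * (i : ℕ) + 1) with
    | .inl (.inr l) => l.2
    | _ => false with hα
  refine ⟨α, ?_⟩
  intro k
  induction k with
  | zero =>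
    rw [hp.1]
    simp only [cpath]
    rw [dif_pos (by omega), dif_pos (by norm_num)]
  | succ k ih =>
    have hedge := hp.2 k
    rw [ih] at hedge
    by_cases h : k < 2 * n
    · by_cases h2 : k % 2 = 0
      · -- p k is a choice vertex; next is a literal vertex
        simp only [cpath, h, h2, dif_pos, dite_true] at hedge
        rcases hv : p (k+1) with (i' | l) | u
        all_goals rw [hv] at hedge
        · simp [clauseGraph] at hedge
        · simp only [clauseGraph] at hedge
          have h1 : k + 1 < 2 * n := by omega
          have h3 : ¬ ((k+1) % 2 = 0) := by omega
          simp only [cpath, h1, h3, dif_pos, dif_neg, not_false_iff]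
          have hk : 2 * ((k+1)/2) + 1 = k + 1 := by omega
          have hαval : α ⟨(k + 1) / 2, by omega⟩ = l.2 := by
            rw [hα]
            simp only [hk, hv]
          have hfst : l.1 = (⟨(k+1)/2, by omega⟩ : Fin n) := by
            rw [hedge]; exact Fin.ext (by simp; omega)
          congr 2
          exact Prod.ext hfst hαval.symm
        · simp [clauseGraph] at hedge
      · -- p k is a literal vertex
        simp only [cpath, h, h2, dif_pos, dif_neg, not_false_iff] at hedge
        rcases hv : p (k+1) with (i' | l) | u
        all_goals rw [hv] at hedge
        · simp only [clauseGraph] at hedge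
          have h1 : k + 1 < 2 * n := by
            have : (i' : ℕ) < n := i'.2
            omega
          have h3 : (k+1) % 2 = 0 := by omega
          simp only [cpath, h1, h3, dif_pos, dite_true]
          have hedge' : (i' : ℕ) = k / 2 + 1 := hedge
          congr 2
          exact Fin.ext (show (i' : ℕ) = (k+1)/2 by omega)
        · simp [clauseGraph] at hedge
        · simp only [clauseGraph] at hedge
          have hedge' : k / 2 + 1 = n := hedge
          have h1 : ¬ (k + 1 < 2 * n) := by omega
          simp [cpath, h1]
    · have h1 : ¬ (k + 1 < 2 * n) := by omega
      simp only [cpath, h, dif_neg, not_false_iff] at hedge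
      rcases hv : p (k+1) with (i' | l) | u
      all_goals rw [hv] at hedge
      · simp [clauseGraph] at hedge
      · simp [clauseGraph] at hedge
      · simp [cpath, h1]

lemma visits_cpath_iff {n : ℕ} (α : Fin n → Bool) (c : Finset (Fin n × Bool)) :
    VisitsClause (cpath α) c ↔ SatClause α c := by
  constructor
  · rintro ⟨k, l, hl, hpk⟩
    unfold cpath at hpk
    by_cases h : k < 2 * n
    · by_cases h2 : k % 2 = 0
      · simp [h, h2] at hpk
      · simp only [h, h2, dif_pos, dif_neg, not_false_iff, Sum.inl.injEq,
          Sum.inr.injEq] at hpk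
        refine ⟨l, hl, ?_⟩
        rw [← hpk]
    · simp [h] at hpk
  · rintro ⟨l, hl, hα⟩
    refine ⟨2 * (l.1 : ℕ) + 1, l, hl, ?_⟩
    have h : 2 * (l.1 : ℕ) + 1 < 2 * n := by have := l.1.2; omega
    have h2 : ¬ ((2 * (l.1 : ℕ) + 1) % 2 = 0) := by omega
    simp only [cpath, h, h2, dif_pos, dif_neg, not_false_iff]
    congr 1
    congr 1
    refine Prod.ext ?_ ?_
    · exact Fin.ext (show ((2 * (l.1 : ℕ) + 1) / 2 : ℕ) = (l.1 : ℕ) by omega)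
    · show α ⟨(2 * (l.1 : ℕ) + 1) / 2, by omega⟩ = l.2
      rw [← hα]
      congr 1
      exact Fin.ext (show ((2 * (l.1 : ℕ) + 1) / 2 : ℕ) = (l.1 : ℕ) by omega)

/-- infinite paths from vertex `1` in the clause graph correspond
to Boolean assignments, matching the satisfied clauses with the visited clause
vertex sets; consequently, for every `k`, a path visiting at least
(resp. at most) `k` of the clause sets exists iff an assignment satisfying
at least (resp. at most) `k` of the clauses exists. -/
theorem clause_graph_paths_vs_assignments (n m : ℕ) (hn : 0 < n)
    (c : Fin m → Finset (Fin n × Bool)) :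
    (∀ p, IsClausePath hn p →
      ∃ α : Fin n → Bool, ∀ j : Fin m, SatClause α (c j) ↔ VisitsClause p (c j)) ∧
    (∀ α : Fin n → Bool, ∃ p, IsClausePath hn p ∧
      ∀ j : Fin m, SatClause α (c j) ↔ VisitsClause p (c j)) ∧
    (∀ k : ℕ,
      ((∃ p, IsClausePath hn p ∧ k ≤ {j : Fin m | VisitsClause p (c j)}.ncard) ↔
        (∃ α : Fin n → Bool, k ≤ {j : Fin m | SatClause α (c j)}.ncard)) ∧
      ((∃ p, IsClausePath hn p ∧ {j : Fin m | VisitsClause p (c j)}.ncard ≤ k) ↔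
        (∃ α : Fin n → Bool, {j : Fin m | SatClause α (c j)}.ncard ≤ k))) := by
  have fwd : ∀ p, IsClausePath hn p →
      ∃ α : Fin n → Bool, ∀ j : Fin m, SatClause α (c j) ↔ VisitsClause p (c j) := by
    intro p hp
    obtain ⟨α, hα⟩ := path_eq_cpath hn p hp
    refine ⟨α, fun j => ?_⟩
    rw [show p = cpath α from funext hα]
    exact (visits_cpath_iff α (c j)).symm
  have bwd : ∀ α : Fin n → Bool, ∃ p, IsClausePath hn p ∧
      ∀ j : Fin m, SatClause α (c j) ↔ VisitsClause p (c j) :=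
    fun α => ⟨cpath α, cpath_isPath hn α, fun j => (visits_cpath_iff α (c j)).symm⟩
  refine ⟨fwd, bwd, fun k => ⟨⟨?_, ?_⟩, ⟨?_, ?_⟩⟩⟩
  · rintro ⟨p, hp, hk⟩
    obtain ⟨α, hiff⟩ := fwd p hp
    refine ⟨α, ?_⟩
    have hset : {j : Fin m | SatClause α (c j)} = {j : Fin m | VisitsClause p (c j)} :=
      Set.ext fun j => hiff j
    rwa [hset]
  · rintro ⟨α, hk⟩
    obtain ⟨p, hp, hiff⟩ := bwd α
    have hset : {j : Fin m | SatClause α (c j)} = {j : Fin m | VisitsClause p (c j)} :=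
      Set.ext fun j => hiff j
    exact ⟨p, hp, by rwa [← hset]⟩
  · rintro ⟨p, hp, hk⟩
    obtain ⟨α, hiff⟩ := fwd p hp
    refine ⟨α, ?_⟩
    have hset : {j : Fin m | SatClause α (c j)} = {j : Fin m | VisitsClause p (c j)} :=
      Set.ext fun j => hiff j
    rwa [hset]
  · rintro ⟨α, hk⟩
    obtain ⟨p, hp, hiff⟩ := bwd α
    have hset : {j : Fin m | SatClause α (c j)} = {j : Fin m | VisitsClause p (c j)} :=
      Set.ext fun j => hiff j
    exact ⟨p, hp, by rwa [← hset]⟩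
end

section
/- Let G = (V, E) be a finite directed graph in which every vertex has at least one outgoing edge, let s ∈ V, and let T ⊆ V be a set of target vertices. Then the minimum, over all infinite paths π from s, of the number of vertices of T visited by π equals the minimum, over all lassos from s, of the number of vertices of T occurring on the lasso. -/
/-- Index function that walks `0,1,...,m-1` and then loops back to `i`. -/
def lassoIdx (m i : ℕ) : ℕ → ℕ
  | 0 => 0
  | j + 1 => if lassoIdx m i j + 1 = m then i else lassoIdx m i j + 1

lemma lassoIdx_lt {m i : ℕ} (him : i < m) : ∀ j, lassoIdx m i j < m
  | 0 => Nat.lt_of_le_of_lt (Nat.zero_le i) him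
  | j + 1 => by
      unfold lassoIdx
      split
      · exact him
      · exact lt_of_le_of_ne (lassoIdx_lt him j) (by assumption)

lemma lassoIdx_eq_of_lt {m i : ℕ} : ∀ j, j < m → lassoIdx m i j = j
  | 0, _ => rfl
  | j + 1, h => by
      unfold lassoIdx
      rw [lassoIdx_eq_of_lt j (Nat.lt_of_succ_lt h)]
      split
      · omega
      · rfl

/-- in a finite directed graph where every vertex has an outgoing
edge, the minimum number of target vertices of `T` visited by an infinite path
from `s` equals the minimum number of target vertices of `T` occurring on a
lasso from `s`. A lasso is a finite path `q 0 ... q m` from `s` whose first `m`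
vertices are pairwise distinct and whose last vertex repeats an earlier one. -/
theorem min_targets_eq_min_lasso {V : Type*} [Fintype V]
    (E : V → V → Prop) (hE : ∀ v, ∃ w, E v w) (s : V) (T : Set V) :
    sInf {c : ℕ | ∃ p : ℕ → V, p 0 = s ∧ (∀ i, E (p i) (p (i + 1))) ∧
        c = (T ∩ {v | ∃ i, p i = v}).ncard} =
    sInf {c : ℕ | ∃ (m : ℕ) (q : ℕ → V), q 0 = s ∧
        (∀ j, j < m → E (q j) (q (j + 1))) ∧
        (∀ j j', j < m → j' < m → q j = q j' → j = j') ∧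
        (∃ i, i < m ∧ q m = q i) ∧
        c = (T ∩ {v | ∃ j ≤ m, q j = v}).ncard} := by
  classical
  set A := {c : ℕ | ∃ p : ℕ → V, p 0 = s ∧ (∀ i, E (p i) (p (i + 1))) ∧
      c = (T ∩ {v | ∃ i, p i = v}).ncard} with hA
  set B := {c : ℕ | ∃ (m : ℕ) (q : ℕ → V), q 0 = s ∧
      (∀ j, j < m → E (q j) (q (j + 1))) ∧
      (∀ j j', j < m → j' < m → q j = q j' → j = j') ∧
      (∃ i, i < m ∧ q m = q i) ∧
      c = (T ∩ {v | ∃ j ≤ m, q j = v}).ncard} with hB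
  -- every lasso gives an infinite path with the same visited set
  have hBA : B ⊆ A := by
    rintro c ⟨m, q, hq0, hedge, hinj, ⟨i, him, hqm⟩, rfl⟩
    refine ⟨fun j => q (lassoIdx m i j), hq0, ?_, ?_⟩
    · intro j
      show E (q (lassoIdx m i j)) (q (lassoIdx m i (j + 1)))
      have hstep : lassoIdx m i (j + 1) =
          if lassoIdx m i j + 1 = m then i else lassoIdx m i j + 1 := rfl
      rw [hstep]
      split
      · rename_i h
        have := hedge (lassoIdx m i j) (lassoIdx_lt him j)
        rw [h, hqm] at this
        exact this
      · exact hedge (lassoIdx m i j) (lassoIdx_lt him j)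
    · congr 1
      congr 1
      ext v
      show (∃ j ≤ m, q j = v) ↔ ∃ k, q (lassoIdx m i k) = v
      constructor
      · rintro ⟨j, hj, rfl⟩
        rcases eq_or_lt_of_le hj with rfl | hj
        · exact ⟨i, by rw [lassoIdx_eq_of_lt i him, ← hqm]⟩
        · exact ⟨j, by rw [lassoIdx_eq_of_lt j hj]⟩
      · rintro ⟨k, rfl⟩
        exact ⟨lassoIdx m i k, le_of_lt (lassoIdx_lt him k), rfl⟩
  -- every infinite path gives a lasso with a smaller-or-equal cost
  have hAB : ∀ c ∈ A, ∃ c' ∈ B, c' ≤ c := by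
    rintro c ⟨p, hp0, hedge, rfl⟩
    have hrep : ∃ j, ∃ k < j, p k = p j := by
      obtain ⟨x, y, hxy, hpe⟩ := Finite.exists_ne_map_eq_of_infinite p
      rcases lt_or_gt_of_ne hxy with h | h
      · exact ⟨y, x, h, hpe⟩
      · exact ⟨x, y, h, hpe.symm⟩
    set m := Nat.find hrep with hm
    refine ⟨(T ∩ {v | ∃ j ≤ m, p j = v}).ncard, ⟨m, p, hp0,
      fun j _ => hedge j, ?_, ?_, rfl⟩, ?_⟩
    · intro j j' hj hj' hpe
      by_contra hne
      rcases lt_or_gt_of_ne hne with h | h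
      · exact Nat.find_min hrep hj' ⟨j, h, hpe⟩
      · exact Nat.find_min hrep hj ⟨j', h, hpe.symm⟩
    · obtain ⟨k, hk, hpe⟩ := Nat.find_spec hrep
      exact ⟨k, hk, hpe.symm⟩
    · refine Set.ncard_le_ncard ?_ (Set.toFinite _)
      rintro v ⟨hvT, j, _, rfl⟩
      exact ⟨hvT, j, rfl⟩
  -- A is nonempty
  have hAne : A.Nonempty := by
    choose f hf using hE
    refine ⟨_, fun n => f^[n] s, rfl, fun n => ?_, rfl⟩
    show E (f^[n] s) (f^[n + 1] s)
    rw [Function.iterate_succ_apply']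
    exact hf _
  have hBne : B.Nonempty := by
    obtain ⟨c', hc', _⟩ := hAB _ (Nat.sInf_mem hAne)
    exact ⟨c', hc'⟩
  apply le_antisymm
  · exact Nat.sInf_le (hBA (Nat.sInf_mem hBne))
  · obtain ⟨c', hc', hle⟩ := hAB _ (Nat.sInf_mem hAne)
    exact le_trans (Nat.sInf_le hc') hle
end
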